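/- arXiv:2004.11972 — 2 statements merged into one kernel-verified Lean document; each statement's English description precedes it below -/
import Mathlib

section
/- Let Π be a κ-obstruction in a society Λ, where either 1 ≤ κ ≤ ℵ₀ or κ is a regular uncountable cardinal. Then δ(Π) = κ, where δ(Π) is the minimum of the cardinals |B| over all B ⊆ M_Π such that Π − B has an espousal. -/
universe u

open Cardinal

/-- A *society* `(M, W, K)`: a set `M` of men, a set `W` of women (disjoint from `M`,
here realized by taking them in different types), and a set `K ⊆ M × W` of compatible
pairs. -/
structure Society (α β : Type u) where
  M : Set α
  W : Set β
  K : Set (α × β)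
  K_mem : ∀ p ∈ K, p.1 ∈ M ∧ p.2 ∈ W

namespace Society

variable {α β : Type u}

/-- An *espousal* of a society: an injective map of the men into the women pairing
each man with a woman compatible with him. -/
def Espousal (Λ : Society α β) (E : α → β) : Prop :=
  Set.InjOn E Λ.M ∧ ∀ m ∈ Λ.M, (m, E m) ∈ Λ.K

def HasEspousal (Λ : Society α β) : Prop := ∃ E, Λ.Espousal E

/-- A society is *critical* if it has an espousal and every espousal is onto the women. -/
def Critical (Λ : Society α β) : Prop :=
  Λ.HasEspousal ∧ ∀ E, Λ.Espousal E → Λ.W ⊆ E '' Λ.M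

/-- `Φ.Sub Λ`: `Π` is the subsociety `Λ[A, X]` of `Λ` with `A = Φ.M`, `X = Φ.W`. -/
def Sub (Φ Λ : Society α β) : Prop :=
  Φ.M ⊆ Λ.M ∧ Φ.W ⊆ Λ.W ∧ Φ.K = Λ.K ∩ Φ.M ×ˢ Φ.W

/-- The subsociety `Λ[A, X]` of `Λ`. -/
def restrict (Λ : Society α β) (A : Set α) (X : Set β) : Society α β where
  M := Λ.M ∩ A
  W := Λ.W ∩ X
  K := Λ.K ∩ A ×ˢ X
  K_mem := fun p hp => ⟨⟨(Λ.K_mem p hp.1).1, hp.2.1⟩, (Λ.K_mem p hp.1).2, hp.2.2⟩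

/-- `Λ − B = Λ[M∖B, W]`. -/
def erase (Λ : Society α β) (B : Set α) : Society α β := Λ.restrict Bᶜ Set.univ

/-- `Λ/Π = Λ[M_Λ∖M_Π, W_Λ∖W_Π]`. -/
def quot (Λ Φ : Society α β) : Society α β := Λ.restrict Φ.Mᶜ Φ.Wᶜ

/-- A subsociety `Π` of `Λ` is *saturated* in `Λ` if `K_Λ[M_Π] ⊆ W_Π`. -/
def SaturatedIn (Φ Λ : Society α β) : Prop :=
  Φ.Sub Λ ∧ ∀ p ∈ Λ.K, p.1 ∈ Φ.M → p.2 ∈ Φ.W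

/-- The empty society. -/
def empty : Society α β := ⟨∅, ∅, ∅, fun p hp => absurd hp (Set.notMem_empty p)⟩

/-- The society `(∅, {w}, ∅)`. -/
def singletonW (w : β) : Society α β :=
  ⟨∅, {w}, ∅, fun p hp => absurd hp (Set.notMem_empty p)⟩

/-- Componentwise union of a family of societies over an index set. -/
def unionIdx (T : Ordinal.{u} → Society α β) (I : Set Ordinal.{u}) : Society α β where
  M := ⋃ i ∈ I, (T i).M
  W := ⋃ i ∈ I, (T i).W
  K := ⋃ i ∈ I, (T i).K
  K_mem := by
    intro p hp
    simp only [Set.mem_iUnion] at hp ⊢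
    obtain ⟨i, hi, hpK⟩ := hp
    exact ⟨⟨i, hi, ((T i).K_mem p hpK).1⟩, ⟨i, hi, ((T i).K_mem p hpK).2⟩⟩

/-- Union of the societies `T i` for `i < θ`. -/
def unionLt (T : Ordinal.{u} → Society α β) (θ : Ordinal.{u}) : Society α β :=
  unionIdx T (Set.Iio θ)

/-- Union of the societies `T i` for `i ≤ θ`. -/
def unionLe (T : Ordinal.{u} → Society α β) (θ : Ordinal.{u}) : Society α β :=
  unionIdx T (Set.Iic θ)

/-- `(T i : i ≤ θ)` is a *`θ`-tower* in `Λ`: a continuous nondescending family of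
saturated subsocieties of `Λ` starting with the empty society. -/
def IsTower (Λ : Society α β) (θ : Ordinal.{u}) (T : Ordinal.{u} → Society α β) : Prop :=
  T 0 = Society.empty ∧
  (∀ i ≤ θ, (T i).SaturatedIn Λ) ∧
  (∀ i j : Ordinal.{u}, i < j → j ≤ θ → (T i).Sub (T j)) ∧
  (∀ i ≤ θ, Order.IsSuccLimit i → T i = unionLt T i)

end Society

/-- A set of ordinals is a *club* in `o`: closed (the supremum of any nonempty subset is
`o` or again in the set) and unbounded (with supremum `o`) in `o`. -/
def IsClubIn (C : Set Ordinal.{u}) (o : Ordinal.{u}) : Prop :=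
  C ⊆ Set.Iio o ∧ (∀ A ⊆ C, A.Nonempty → sSup A = o ∨ sSup A ∈ C) ∧ sSup C = o

/-- A set of ordinals is *stationary* in `o` if it meets every club in `o`. -/
def IsStationaryIn (S : Set Ordinal.{u}) (o : Ordinal.{u}) : Prop :=
  S ⊆ Set.Iio o ∧ ∀ C, IsClubIn C o → (S ∩ C).Nonempty

/-- `IsObstruction κ Φ Λ`: `Π` is a *`κ`-obstruction* in `Λ`.  For `1 ≤ κ ≤ ℵ₀` this
means `Π` is saturated in `Λ` and `Π − A` is critical for some `A ⊆ M_Π` with `|A| = κ`.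
For `κ` regular uncountable it means `Π` is the union of a `κ`-tower `(Σ_α : α ≤ κ)` in
`Λ` such that each quotient `Σ_{α+1}/Σ_α` is either a `μ`-obstruction in `Λ/Σ_α` for some
`μ < κ` (which happens on a stationary set `S` of indices `α < κ`) or of the form
`(∅, {w}, ∅)` for some `w ∈ W_Λ`. -/
inductive IsObstruction {α β : Type u} :
    Cardinal.{u} → Society α β → Society α β → Prop
  | small {κ : Cardinal.{u}} {Φ Λ : Society α β}
      (h1 : 1 ≤ κ) (h2 : κ ≤ ℵ₀)
      (hsat : Φ.SaturatedIn Λ)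
      (hA : ∃ A ⊆ Φ.M, Cardinal.mk A = κ ∧ (Φ.erase A).Critical) :
      IsObstruction κ Φ Λ
  | large {κ : Cardinal.{u}} {Φ Λ : Society α β}
      (T : Ordinal.{u} → Society α β) (S : Set Ordinal.{u})
      (hreg : κ.IsRegular) (hunc : ℵ₀ < κ)
      (htower : Society.IsTower Λ κ.ord T)
      (μ : Ordinal.{u} → Cardinal.{u}) (hμ : ∀ i ∈ S, μ i < κ)
      (hS : ∀ i ∈ S, IsObstruction (μ i) ((T (i + 1)).quot (T i)) (Λ.quot (T i)))
      (hoff : ∀ i < κ.ord, i ∉ S →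
        ∃ w ∈ Λ.W, (T (i + 1)).quot (T i) = Society.singletonW w)
      (hstat : IsStationaryIn S κ.ord)
      (hunion : Φ = Society.unionLe T κ.ord) :
      IsObstruction κ Φ Λ

/-- `δ(Λ)`: the least cardinality of a set `B ⊆ M_Λ` such that `Λ − B` has an espousal. -/
noncomputable def Society.delta (Λ : Society α β) : Cardinal.{u} :=
  sInf {c | ∃ B ⊆ Λ.M, Cardinal.mk B = c ∧ (Λ.erase B).HasEspousal}

section ObstructionProof

open Society Set

variable {α β : Type u}

/-! ### Basic facts about `erase`, `quot`, towers and stages -/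

theorem Society.erase_M (Φ : Society α β) (B : Set α) : (Φ.erase B).M = Φ.M \ B := by
  simp [Society.erase, Society.restrict, Set.diff_eq]

theorem Society.erase_W (Φ : Society α β) (B : Set α) : (Φ.erase B).W = Φ.W := by
  simp [Society.erase, Society.restrict]

theorem Society.mem_erase_K (Φ : Society α β) (B : Set α) (p : α × β) :
    p ∈ (Φ.erase B).K ↔ p ∈ Φ.K ∧ p.1 ∉ B := by
  simp [Society.erase, Society.restrict]

theorem Society.quot_M (Λ Φ : Society α β) : (Λ.quot Φ).M = Λ.M ∩ Φ.Mᶜ := rfl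

theorem Society.quot_W (Λ Φ : Society α β) : (Λ.quot Φ).W = Λ.W ∩ Φ.Wᶜ := rfl

theorem Society.mem_quot_K (Λ Φ : Society α β) (p : α × β) :
    p ∈ (Λ.quot Φ).K ↔ p ∈ Λ.K ∧ p.1 ∉ Φ.M ∧ p.2 ∉ Φ.W := by
  simp [Society.quot, Society.restrict]

/-- The stage of a man in a tower: the predecessor of the first index at which he
appears. -/
noncomputable def towerStg (T : Ordinal.{u} → Society α β) (m : α) : Ordinal.{u} :=
  Ordinal.pred (sInf {i | m ∈ (T i).M})

/-- The stage of a woman in a tower. -/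
noncomputable def towerWStg (T : Ordinal.{u} → Society α β) (w : β) : Ordinal.{u} :=
  Ordinal.pred (sInf {i | w ∈ (T i).W})

section Tower

variable {Λ : Society α β} {T : Ordinal.{u} → Society α β} {θ : Ordinal.{u}}

theorem tower_M_mono (hT : Society.IsTower Λ θ T) {i j : Ordinal.{u}} (hij : i ≤ j)
    (hj : j ≤ θ) : (T i).M ⊆ (T j).M := by
  rcases eq_or_lt_of_le hij with rfl | h
  · exact subset_rfl
  · exact (hT.2.2.1 i j h hj).1

theorem tower_W_mono (hT : Society.IsTower Λ θ T) {i j : Ordinal.{u}} (hij : i ≤ j)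
    (hj : j ≤ θ) : (T i).W ⊆ (T j).W := by
  rcases eq_or_lt_of_le hij with rfl | h
  · exact subset_rfl
  · exact (hT.2.2.1 i j h hj).2.1

theorem tower_K_mono (hT : Society.IsTower Λ θ T) {i j : Ordinal.{u}} (hij : i ≤ j)
    (hj : j ≤ θ) : (T i).K ⊆ (T j).K := by
  rcases eq_or_lt_of_le hij with rfl | h
  · exact subset_rfl
  · rw [(hT.2.2.1 i j h hj).2.2]; exact Set.inter_subset_left

theorem tower_K_sub (hT : Society.IsTower Λ θ T) {i : Ordinal.{u}} (hi : i ≤ θ) :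
    (T i).K ⊆ Λ.K := by
  rw [(hT.2.1 i hi).1.2.2]; exact Set.inter_subset_left

theorem tower_sat (hT : Society.IsTower Λ θ T) {i : Ordinal.{u}} (hi : i ≤ θ)
    {m : α} {w : β} (hmw : (m, w) ∈ Λ.K) (hm : m ∈ (T i).M) : w ∈ (T i).W :=
  (hT.2.1 i hi).2 (m, w) hmw hm

theorem towerStg_spec (hT : Society.IsTower Λ θ T) {m : α} (hm : m ∈ (T θ).M) :
    towerStg T m < θ ∧ m ∈ (T (towerStg T m + 1)).M ∧ m ∉ (T (towerStg T m)).M := by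
  set s : Set Ordinal.{u} := {i | m ∈ (T i).M} with hs
  have hne : s.Nonempty := ⟨θ, hm⟩
  have hmem : sInf s ∈ s := csInf_mem hne
  have hle : sInf s ≤ θ := csInf_le (OrderBot.bddBelow s) hm
  rcases Ordinal.zero_or_succ_or_isSuccLimit (sInf s) with h0 | ⟨γ, hγ⟩ | hlim
  · exfalso
    rw [h0] at hmem
    have : m ∈ (Society.empty : Society α β).M := by rw [← hT.1]; exact hmem
    exact this
  · have hpred : towerStg T m = γ := by
      rw [towerStg, ← hs, ← hγ]; exact Ordinal.pred_succ γ
    have h1 : m ∈ (T (γ + 1)).M := by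
      have := hmem
      rwa [← hγ, ← Ordinal.add_one_eq_succ] at this
    have h2 : m ∉ (T γ).M := by
      intro hmem2
      have : sInf s ≤ γ := csInf_le (OrderBot.bddBelow s) hmem2
      rw [← hγ] at this
      exact absurd this (not_le.2 (Order.lt_succ γ))
    have h3 : γ < θ := by
      have : γ < sInf s := by rw [← hγ]; exact Order.lt_succ γ
      exact lt_of_lt_of_le this hle
    rw [hpred]; exact ⟨h3, h1, h2⟩
  · exfalso
    have := hT.2.2.2 (sInf s) hle hlim
    have hmem' : m ∈ (Society.unionLt T (sInf s)).M := by rw [← this]; exact hmem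
    simp only [Society.unionLt, Society.unionIdx, Set.mem_iUnion] at hmem'
    obtain ⟨j, hj, hjm⟩ := hmem'
    have : sInf s ≤ j := csInf_le (OrderBot.bddBelow s) hjm
    exact absurd hj (not_lt.2 this)

theorem towerStg_lt {m : α} {i : Ordinal.{u}} (hT : Society.IsTower Λ θ T)
    (hm : m ∈ (T θ).M) (hi : i ≤ θ) (him : m ∈ (T i).M) : towerStg T m < i := by
  have hspec := towerStg_spec hT hm
  by_contra hcon
  push_neg at hcon
  exact hspec.2.2 (tower_M_mono hT hcon (le_of_lt hspec.1) him)

theorem towerWStg_spec (hT : Society.IsTower Λ θ T) {w : β} (hw : w ∈ (T θ).W) :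
    towerWStg T w < θ ∧ w ∈ (T (towerWStg T w + 1)).W ∧ w ∉ (T (towerWStg T w)).W := by
  set s : Set Ordinal.{u} := {i | w ∈ (T i).W} with hs
  have hne : s.Nonempty := ⟨θ, hw⟩
  have hmem : sInf s ∈ s := csInf_mem hne
  have hle : sInf s ≤ θ := csInf_le (OrderBot.bddBelow s) hw
  rcases Ordinal.zero_or_succ_or_isSuccLimit (sInf s) with h0 | ⟨γ, hγ⟩ | hlim
  · exfalso
    rw [h0] at hmem
    have : w ∈ (Society.empty : Society α β).W := by rw [← hT.1]; exact hmem
    exact this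
  · have hpred : towerWStg T w = γ := by
      rw [towerWStg, ← hs, ← hγ]; exact Ordinal.pred_succ γ
    have h1 : w ∈ (T (γ + 1)).W := by
      have := hmem
      rwa [← hγ, ← Ordinal.add_one_eq_succ] at this
    have h2 : w ∉ (T γ).W := by
      intro hmem2
      have : sInf s ≤ γ := csInf_le (OrderBot.bddBelow s) hmem2
      rw [← hγ] at this
      exact absurd this (not_le.2 (Order.lt_succ γ))
    have h3 : γ < θ := by
      have : γ < sInf s := by rw [← hγ]; exact Order.lt_succ γ
      exact lt_of_lt_of_le this hle
    rw [hpred]; exact ⟨h3, h1, h2⟩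
  · exfalso
    have := hT.2.2.2 (sInf s) hle hlim
    have hmem' : w ∈ (Society.unionLt T (sInf s)).W := by rw [← this]; exact hmem
    simp only [Society.unionLt, Society.unionIdx, Set.mem_iUnion] at hmem'
    obtain ⟨j, hj, hjw⟩ := hmem'
    have : sInf s ≤ j := csInf_le (OrderBot.bddBelow s) hjw
    exact absurd hj (not_lt.2 this)

theorem towerWStg_lt {w : β} {i : Ordinal.{u}} (hT : Society.IsTower Λ θ T)
    (hw : w ∈ (T θ).W) (hi : i ≤ θ) (hiw : w ∈ (T i).W) : towerWStg T w < i := by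
  have hspec := towerWStg_spec hT hw
  by_contra hcon
  push_neg at hcon
  exact hspec.2.2 (tower_W_mono hT hcon (le_of_lt hspec.1) hiw)

end Tower


/-! ### The small case: critical societies and alternating paths -/

theorem surplus_small {α β : Type u} {Φ : Society α β} {A B : Set α} (hA : A ⊆ Φ.M)
    (hcrit : (Φ.erase A).Critical) (hB : B ⊆ Φ.M) {E : α → β}
    (hE : (Φ.erase B).Espousal E) :
    #(A : Set α) + #(Φ.W \ E '' (Φ.M \ B) : Set β) ≤ #(B : Set α) := by
  classical
  obtain ⟨⟨F, hFesp⟩, honto⟩ := hcrit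
  have hFinj : Set.InjOn F (Φ.M \ A) := by
    have := hFesp.1; rwa [Society.erase_M] at this
  have hFK : ∀ m ∈ Φ.M \ A, (m, F m) ∈ Φ.K := by
    intro m hm
    have h := hFesp.2 m (by rw [Society.erase_M]; exact hm)
    exact ((Society.mem_erase_K Φ A _).1 h).1
  have hFW : ∀ m ∈ Φ.M \ A, F m ∈ Φ.W := fun m hm => (Φ.K_mem _ (hFK m hm)).2
  have hEinj : Set.InjOn E (Φ.M \ B) := by
    have := hE.1; rwa [Society.erase_M] at this
  have hEK : ∀ m ∈ Φ.M \ B, (m, E m) ∈ Φ.K := by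
    intro m hm
    have h := hE.2 m (by rw [Society.erase_M]; exact hm)
    exact ((Society.mem_erase_K Φ B _).1 h).1
  have hEW : ∀ m ∈ Φ.M \ B, E m ∈ Φ.W := fun m hm => (Φ.K_mem _ (hEK m hm)).2
  have hFonto : Φ.W ⊆ F '' (Φ.M \ A) := by
    have := honto F hFesp
    rwa [Society.erase_W, Society.erase_M] at this
  -- degenerate case: α empty
  by_cases hαne : Nonempty α
  swap
  · haveI : IsEmpty α := not_nonempty_iff.mp hαne
    have hAe : #(A : Set α) = 0 := Cardinal.mk_eq_zero _
    have hWe : Φ.W = ∅ := by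
      apply Set.eq_empty_iff_forall_notMem.2
      intro w hw
      obtain ⟨m, _, _⟩ := hFonto hw
      exact hαne ⟨m⟩
    have hUe : #(Φ.W \ E '' (Φ.M \ B) : Set β) = 0 := by
      rw [hWe]; simp
    rw [hAe, hUe]; simp
  -- the inverse of F
  obtain ⟨invt, hinvt⟩ : ∃ f : β → α, ∀ w ∈ Φ.W, f w ∈ Φ.M \ A ∧ F (f w) = w := by
    refine ⟨fun w => if h : ∃ m, m ∈ Φ.M \ A ∧ F m = w then h.choose else Classical.arbitrary α,
      fun w hw => ?_⟩
    have hex : ∃ m, m ∈ Φ.M \ A ∧ F m = w := by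
      obtain ⟨m, hm, hFm⟩ := hFonto hw; exact ⟨m, hm, hFm⟩
    simp only [dif_pos hex]
    exact hex.choose_spec
  -- the step function of the alternating walk
  obtain ⟨g, hg1, hg2⟩ : ∃ g : β → β, (∀ w, invt w ∈ B → g w = w) ∧
      (∀ w, invt w ∉ B → g w = E (invt w)) :=
    ⟨fun w => if invt w ∈ B then w else E (invt w), fun w h => if_pos h, fun w h => if_neg h⟩
  -- membership of walks in W while unstopped
  have hseqW : ∀ (v : β), v ∈ Φ.W → ∀ n : ℕ, (∀ k < n, invt (g^[k] v) ∉ B) →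
      g^[n] v ∈ Φ.W := by
    intro v hv n
    induction n with
    | zero => intro _; exact hv
    | succ n ih =>
      intro hb
      have hW : g^[n] v ∈ Φ.W := ih (fun k hk => hb k (hk.trans (Nat.lt_succ_self n)))
      have hnB : invt (g^[n] v) ∉ B := hb n (Nat.lt_succ_self n)
      rw [Function.iterate_succ_apply', hg2 _ hnB]
      exact hEW _ ⟨(hinvt _ hW).1.1, hnB⟩
  -- termination of the walk
  have reach : ∀ (v : β), v ∈ Φ.W → v ∉ E '' (Φ.M \ (A ∪ B)) →
      ∃ n, invt (g^[n] v) ∈ B := by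
    intro v hvW hv
    by_contra hno
    push_neg at hno
    have hsW : ∀ n, g^[n] v ∈ Φ.W := fun n => hseqW v hvW n (fun k _ => hno k)
    have hmem : ∀ n, invt (g^[n] v) ∈ Φ.M \ A := fun n => (hinvt _ (hsW n)).1
    have hFi : ∀ n, F (invt (g^[n] v)) = g^[n] v := fun n => (hinvt _ (hsW n)).2
    have hMB : ∀ n, invt (g^[n] v) ∈ Φ.M \ B := fun n => ⟨(hmem n).1, hno n⟩
    have hMAB : ∀ n, invt (g^[n] v) ∈ Φ.M \ (A ∪ B) := fun n =>
      ⟨(hmem n).1, fun hc => hc.elim (hmem n).2 (hno n)⟩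
    have hsuc : ∀ n : ℕ, g^[n+1] v = E (invt (g^[n] v)) := by
      intro n; rw [Function.iterate_succ_apply', hg2 _ (hno n)]
    have hseqinj : ∀ j k : ℕ, g^[j] v = g^[k] v → j = k := by
      intro j
      induction j with
      | zero =>
        intro k hk
        cases k with
        | zero => rfl
        | succ k =>
          exfalso
          rw [hsuc k] at hk
          exact hv ⟨invt (g^[k] v), hMAB k, hk.symm⟩
      | succ j ih =>
        intro k hk
        cases k with
        | zero =>
          exfalso
          rw [hsuc j] at hk
          exact hv ⟨invt (g^[j] v), hMAB j, hk⟩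
        | succ k =>
          rw [hsuc j, hsuc k] at hk
          have hmeq := hEinj (hMB j) (hMB k) hk
          have : g^[j] v = g^[k] v := by rw [← hFi j, ← hFi k, hmeq]
          rw [ih k this]
    -- the modified espousal avoiding v
    obtain ⟨F', hF'1, hF'2⟩ : ∃ F' : α → β,
        (∀ m, (∃ n : ℕ, m = invt (g^[n] v)) → F' m = E m) ∧
        (∀ m, (¬∃ n : ℕ, m = invt (g^[n] v)) → F' m = F m) :=
      ⟨fun m => if h : ∃ n : ℕ, m = invt (g^[n] v) then E m else F m,
        fun m h => dif_pos h, fun m h => dif_neg h⟩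
    have hF'esp : (Φ.erase A).Espousal F' := by
      constructor
      · rw [Society.erase_M]
        intro x hx y hy hxy
        by_cases hxw : ∃ n : ℕ, x = invt (g^[n] v) <;>
          by_cases hyw : ∃ n : ℕ, y = invt (g^[n] v)
        · obtain ⟨n, rfl⟩ := hxw
          obtain ⟨k, rfl⟩ := hyw
          rw [hF'1 _ ⟨n, rfl⟩, hF'1 _ ⟨k, rfl⟩] at hxy
          exact hEinj (hMB n) (hMB k) hxy
        · exfalso
          obtain ⟨n, rfl⟩ := hxw
          rw [hF'1 _ ⟨n, rfl⟩, hF'2 y hyw] at hxy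
          have : F y = g^[n+1] v := by rw [hsuc n, ← hxy]
          rw [← hFi (n+1)] at this
          exact hyw ⟨n+1, (hFinj hy (hmem (n+1)) this)⟩
        · exfalso
          obtain ⟨k, rfl⟩ := hyw
          rw [hF'1 _ ⟨k, rfl⟩, hF'2 x hxw] at hxy
          have : F x = g^[k+1] v := by rw [hsuc k, hxy]
          rw [← hFi (k+1)] at this
          exact hxw ⟨k+1, (hFinj hx (hmem (k+1)) this)⟩
        · rw [hF'2 x hxw, hF'2 y hyw] at hxy
          exact hFinj hx hy hxy
      · intro m hm
        rw [Society.erase_M] at hm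
        rw [Society.mem_erase_K]
        by_cases hmw : ∃ n : ℕ, m = invt (g^[n] v)
        · rw [hF'1 m hmw]
          obtain ⟨n, rfl⟩ := hmw
          exact ⟨hEK _ (hMB n), hm.2⟩
        · rw [hF'2 m hmw]
          exact ⟨hFK m hm, hm.2⟩
    have h := honto F' hF'esp
    rw [Society.erase_W, Society.erase_M] at h
    obtain ⟨x, hx, hFx⟩ := h hvW
    by_cases hxw : ∃ n : ℕ, x = invt (g^[n] v)
    · obtain ⟨n, rfl⟩ := hxw
      rw [hF'1 _ ⟨n, rfl⟩] at hFx
      have : g^[n+1] v = g^[0] v := by rw [hsuc n, hFx]; rfl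
      exact Nat.succ_ne_zero n (hseqinj (n+1) 0 this)
    · rw [hF'2 x hxw] at hFx
      have : F x = g^[0] v := hFx
      rw [← hFi 0] at this
      exact hxw ⟨0, hFinj hx (hmem 0) this⟩
  -- backward determinism of walks
  have back : ∀ (n : ℕ) (v v' : β), v ∈ Φ.W → v' ∈ Φ.W →
      v ∉ E '' (Φ.M \ (A ∪ B)) → v' ∉ E '' (Φ.M \ (A ∪ B)) → ∀ (n' : ℕ),
      (∀ k < n, invt (g^[k] v) ∉ B) → (∀ k < n', invt (g^[k] v') ∉ B) →
      g^[n] v = g^[n'] v' → v = v' ∧ n = n' := by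
    intro n
    induction n with
    | zero =>
      intro v v' hvW hv'W hv hv' n' hbn hbn' heq
      cases n' with
      | zero => exact ⟨heq, rfl⟩
      | succ k =>
        exfalso
        have hk : invt (g^[k] v') ∉ B := hbn' k (Nat.lt_succ_self k)
        have hkW : g^[k] v' ∈ Φ.W := hseqW v' hv'W k
          (fun j hj => hbn' j (hj.trans (Nat.lt_succ_self k)))
        have : g^[k+1] v' = E (invt (g^[k] v')) := by
          rw [Function.iterate_succ_apply', hg2 _ hk]
        apply hv
        refine ⟨invt (g^[k] v'), ⟨(hinvt _ hkW).1.1, ?_⟩, by rw [← this, ← heq]; rfl⟩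
        intro hc
        exact hc.elim (hinvt _ hkW).1.2 hk
    | succ n ih =>
      intro v v' hvW hv'W hv hv' n' hbn hbn' heq
      cases n' with
      | zero =>
        exfalso
        have hk : invt (g^[n] v) ∉ B := hbn n (Nat.lt_succ_self n)
        have hkW : g^[n] v ∈ Φ.W := hseqW v hvW n
          (fun j hj => hbn j (hj.trans (Nat.lt_succ_self n)))
        have : g^[n+1] v = E (invt (g^[n] v)) := by
          rw [Function.iterate_succ_apply', hg2 _ hk]
        apply hv'
        refine ⟨invt (g^[n] v), ⟨(hinvt _ hkW).1.1, ?_⟩, by rw [← this, heq]; rfl⟩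
        intro hc
        exact hc.elim (hinvt _ hkW).1.2 hk
      | succ k =>
        have hnB : invt (g^[n] v) ∉ B := hbn n (Nat.lt_succ_self n)
        have hkB : invt (g^[k] v') ∉ B := hbn' k (Nat.lt_succ_self k)
        have hnW : g^[n] v ∈ Φ.W := hseqW v hvW n
          (fun j hj => hbn j (hj.trans (Nat.lt_succ_self n)))
        have hkW : g^[k] v' ∈ Φ.W := hseqW v' hv'W k
          (fun j hj => hbn' j (hj.trans (Nat.lt_succ_self k)))
        rw [Function.iterate_succ_apply', Function.iterate_succ_apply',
          hg2 _ hnB, hg2 _ hkB] at heq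
        have hmeq := hEinj ⟨(hinvt _ hnW).1.1, hnB⟩ ⟨(hinvt _ hkW).1.1, hkB⟩ heq
        have hseq : g^[n] v = g^[k] v' := by
          rw [← (hinvt _ hnW).2, ← (hinvt _ hkW).2, hmeq]
        obtain ⟨hveq, hneq⟩ := ih v v' hvW hv'W hv hv' k
          (fun j hj => hbn j (hj.trans (Nat.lt_succ_self n)))
          (fun j hj => hbn' j (hj.trans (Nat.lt_succ_self k))) hseq
        exact ⟨hveq, by rw [hneq]⟩
  -- the injection from (A \ B) ⊕ U into B \ A
  set U : Set β := Φ.W \ E '' (Φ.M \ B) with hU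
  obtain ⟨sw, hswW, hswE, hswinj⟩ : ∃ sw : ↥(A \ B) ⊕ ↥U → β, (∀ d, sw d ∈ Φ.W) ∧
      (∀ d, sw d ∉ E '' (Φ.M \ (A ∪ B))) ∧ Function.Injective sw := by
    refine ⟨Sum.elim (fun a : ↥(A \ B) => E (a : α)) (fun u : ↥U => (u : β)), ?_, ?_, ?_⟩
    · rintro (a | uu)
      · exact hEW _ ⟨hA a.2.1, a.2.2⟩
      · exact uu.2.1
    · rintro (a | uu)
      · rintro ⟨m, hm, hme⟩
        have : m = (a : α) := hEinj ⟨hm.1, fun hc => hm.2 (Or.inr hc)⟩ ⟨hA a.2.1, a.2.2⟩ hme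
        exact hm.2 (Or.inl (this ▸ a.2.1))
      · intro hc
        exact uu.2.2 (Set.image_mono (f := E) (Set.diff_subset_diff_right Set.subset_union_right) hc)
    · intro d d' hdd
      cases d with
      | inl a =>
        cases d' with
        | inl a' =>
          have : (a : α) = (a' : α) :=
            hEinj ⟨hA a.2.1, a.2.2⟩ ⟨hA a'.2.1, a'.2.2⟩ hdd
          exact congrArg Sum.inl (Subtype.ext this)
        | inr uu =>
          exfalso
          have hdd' : E (a : α) = (uu : β) := hdd
          exact uu.2.2 ⟨(a : α), ⟨hA a.2.1, a.2.2⟩, hdd'⟩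
      | inr uu =>
        cases d' with
        | inl a' =>
          exfalso
          have hdd' : E (a' : α) = (uu : β) := hdd.symm
          exact uu.2.2 ⟨(a' : α), ⟨hA a'.2.1, a'.2.2⟩, hdd'⟩
        | inr uu' => exact congrArg Sum.inr (Subtype.ext hdd)
  have hreach : ∀ d, ∃ n, invt (g^[n] (sw d)) ∈ B := fun d => reach _ (hswW d) (hswE d)
  let N : ↥(A \ B) ⊕ ↥U → ℕ := fun d => Nat.find (hreach d)
  have hNB : ∀ d, invt (g^[N d] (sw d)) ∈ B := fun d => Nat.find_spec (hreach d)
  have hNmin : ∀ d, ∀ k < N d, invt (g^[k] (sw d)) ∉ B := fun d k hk =>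
    Nat.find_min (hreach d) hk
  have hNW : ∀ d, g^[N d] (sw d) ∈ Φ.W := fun d => hseqW _ (hswW d) _ (hNmin d)
  have hNMA : ∀ d, invt (g^[N d] (sw d)) ∈ Φ.M \ A := fun d => (hinvt _ (hNW d)).1
  have hfinal : Function.Injective
      (fun d : ↥(A \ B) ⊕ ↥U => (⟨invt (g^[N d] (sw d)), hNB d, (hNMA d).2⟩ : ↥(B \ A))) := by
    intro d d' hdd
    have hval : invt (g^[N d] (sw d)) = invt (g^[N d'] (sw d')) := congrArg Subtype.val hdd
    have hseq : g^[N d] (sw d) = g^[N d'] (sw d') := by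
      rw [← (hinvt _ (hNW d)).2, ← (hinvt _ (hNW d')).2, hval]
    obtain ⟨hveq, _⟩ := back (N d) (sw d) (sw d') (hswW d) (hswW d') (hswE d) (hswE d')
      (N d') (hNmin d) (hNmin d') hseq
    exact hswinj hveq
  have hcard : #(A \ B : Set α) + #(U : Set β) ≤ #(B \ A : Set α) := by
    rw [Cardinal.add_def]
    exact Cardinal.mk_le_of_injective hfinal
  have h1 : #(A : Set α) = #(A ∩ B : Set α) + #(A \ B : Set α) := by
    have e1 : (A ∩ B) ∪ (A \ B) = A := by
      ext x
      simp only [Set.mem_union, Set.mem_inter_iff, Set.mem_diff]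
      tauto
    have d1 : Disjoint (A ∩ B : Set α) (A \ B) :=
      Set.disjoint_left.2 (fun x hx hx2 => hx2.2 hx.2)
    rw [← Cardinal.mk_union_of_disjoint d1, e1]
  have h2 : #(B : Set α) = #(A ∩ B : Set α) + #(B \ A : Set α) := by
    have e2 : (A ∩ B) ∪ (B \ A) = B := by
      ext x
      simp only [Set.mem_union, Set.mem_inter_iff, Set.mem_diff]
      tauto
    have d2 : Disjoint (A ∩ B : Set α) (B \ A) :=
      Set.disjoint_left.2 (fun x hx hx2 => hx2.2 hx.1)
    rw [← Cardinal.mk_union_of_disjoint d2, e2]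
  calc #(A : Set α) + #(U : Set β)
      = #(A ∩ B : Set α) + (#(A \ B : Set α) + #(U : Set β)) := by rw [h1, add_assoc]
    _ ≤ #(A ∩ B : Set α) + #(B \ A : Set α) := add_le_add_right hcard _
    _ = #(B : Set α) := h2.symm

/-! ### Stage societies of a tower -/

theorem ord_add_one_le_of_lt {a b : Ordinal.{u}} (h : a < b) : a + 1 ≤ b := by
  rw [Ordinal.add_one_eq_succ]; exact Order.succ_le_of_lt h

section Stage

variable {Λ : Society α β} {T : Ordinal.{u} → Society α β} {θ : Ordinal.{u}}

theorem unionLe_M (hT : Society.IsTower Λ θ T) : (Society.unionLe T θ).M = (T θ).M := by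
  apply Set.Subset.antisymm
  · intro m hm
    simp only [Society.unionLe, Society.unionIdx, Set.mem_iUnion] at hm
    obtain ⟨i, hi, h⟩ := hm
    exact tower_M_mono hT hi le_rfl h
  · intro m hm
    simp only [Society.unionLe, Society.unionIdx, Set.mem_iUnion]
    exact ⟨θ, Set.self_mem_Iic, hm⟩

theorem unionLe_W (hT : Society.IsTower Λ θ T) : (Society.unionLe T θ).W = (T θ).W := by
  apply Set.Subset.antisymm
  · intro w hw
    simp only [Society.unionLe, Society.unionIdx, Set.mem_iUnion] at hw
    obtain ⟨i, hi, h⟩ := hw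
    exact tower_W_mono hT hi le_rfl h
  · intro w hw
    simp only [Society.unionLe, Society.unionIdx, Set.mem_iUnion]
    exact ⟨θ, Set.self_mem_Iic, hw⟩

theorem unionLe_K (hT : Society.IsTower Λ θ T) : (Society.unionLe T θ).K = (T θ).K := by
  apply Set.Subset.antisymm
  · intro p hp
    simp only [Society.unionLe, Society.unionIdx, Set.mem_iUnion] at hp
    obtain ⟨i, hi, h⟩ := hp
    exact tower_K_mono hT hi le_rfl h
  · intro p hp
    simp only [Society.unionLe, Society.unionIdx, Set.mem_iUnion]
    exact ⟨θ, Set.self_mem_Iic, hp⟩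

/-- Membership in the men of a stage society. -/
theorem stageM_mem (hT : Society.IsTower Λ θ T) (hθ : Order.IsSuccLimit θ) {m : α} {i : Ordinal.{u}}
    (hi : i < θ) :
    m ∈ ((T (i+1)).quot (T i)).M ↔ m ∈ (T θ).M ∧ towerStg T m = i := by
  have hi1 : i + 1 ≤ θ := ord_add_one_le_of_lt hi
  rw [Society.quot_M]
  constructor
  · rintro ⟨h1, h2⟩
    have hmθ : m ∈ (T θ).M := tower_M_mono hT hi1 le_rfl h1
    have hlt : towerStg T m < i + 1 := towerStg_lt hT hmθ hi1 h1
    have hge : ¬ towerStg T m < i := by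
      intro hc
      exact h2 (tower_M_mono hT (ord_add_one_le_of_lt hc) hi.le ((towerStg_spec hT hmθ).2.1))
    refine ⟨hmθ, le_antisymm ?_ (not_lt.1 hge)⟩
    rw [Ordinal.add_one_eq_succ, Order.lt_succ_iff] at hlt
    exact hlt
  · rintro ⟨h1, h2⟩
    have hspec := towerStg_spec hT h1
    rw [h2] at hspec
    exact ⟨hspec.2.1, hspec.2.2⟩

/-- Membership in the women of a stage society. -/
theorem stageW_mem (hT : Society.IsTower Λ θ T) (hθ : Order.IsSuccLimit θ) {w : β} {i : Ordinal.{u}}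
    (hi : i < θ) :
    w ∈ ((T (i+1)).quot (T i)).W ↔ w ∈ (T θ).W ∧ towerWStg T w = i := by
  have hi1 : i + 1 ≤ θ := ord_add_one_le_of_lt hi
  rw [Society.quot_W]
  constructor
  · rintro ⟨h1, h2⟩
    have hwθ : w ∈ (T θ).W := tower_W_mono hT hi1 le_rfl h1
    have hlt : towerWStg T w < i + 1 := towerWStg_lt hT hwθ hi1 h1
    have hge : ¬ towerWStg T w < i := by
      intro hc
      exact h2 (tower_W_mono hT (ord_add_one_le_of_lt hc) hi.le ((towerWStg_spec hT hwθ).2.1))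
    refine ⟨hwθ, le_antisymm ?_ (not_lt.1 hge)⟩
    rw [Ordinal.add_one_eq_succ, Order.lt_succ_iff] at hlt
    exact hlt
  · rintro ⟨h1, h2⟩
    have hspec := towerWStg_spec hT h1
    rw [h2] at hspec
    exact ⟨hspec.2.1, hspec.2.2⟩

/-- A compatible pair whose man is in stage `i` and whose woman is not below stage `i`
is a compatible pair of the stage society. -/
theorem stageK_mem (hT : Society.IsTower Λ θ T) (hθ : Order.IsSuccLimit θ) {i : Ordinal.{u}}
    (hi : i < θ) {m : α} {w : β} (hmw : (m, w) ∈ Λ.K)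
    (hm : m ∈ ((T (i+1)).quot (T i)).M) (hw : w ∉ (T i).W) :
    (m, w) ∈ ((T (i+1)).quot (T i)).K := by
  have hi1 : i + 1 ≤ θ := ord_add_one_le_of_lt hi
  have hm1 : m ∈ (T (i+1)).M := hm.1
  have hw1 : w ∈ (T (i+1)).W := tower_sat hT hi1 hmw hm1
  rw [Society.mem_quot_K]
  refine ⟨?_, hm.2, hw⟩
  rw [(hT.2.1 (i+1) hi1).1.2.2]
  exact ⟨hmw, hm1, hw1⟩

end Stage

/-! ### The large case, upper bound -/

theorem large_P1 {α β : Type u} [Nonempty β] {Λ : Society α β} {T : Ordinal.{u} → Society α β}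
    {S : Set Ordinal.{u}} {κ : Cardinal.{u}} (hreg : κ.IsRegular) (hunc : ℵ₀ < κ)
    (htower : Society.IsTower Λ κ.ord T)
    (μ : Ordinal.{u} → Cardinal.{u}) (hμ : ∀ i ∈ S, μ i < κ)
    (hoff : ∀ i < κ.ord, i ∉ S → ∃ w ∈ Λ.W, (T (i + 1)).quot (T i) = Society.singletonW w)
    (hstat : IsStationaryIn S κ.ord)
    (ih : ∀ i ∈ S, ∃ B ⊆ ((T (i+1)).quot (T i)).M, #(B : Set α) ≤ μ i ∧
      (((T (i+1)).quot (T i)).erase B).HasEspousal) :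
    ∃ B ⊆ (Society.unionLe T κ.ord).M, #(B : Set α) ≤ κ ∧
      ((Society.unionLe T κ.ord).erase B).HasEspousal := by
  classical
  set θ := κ.ord with hθdef
  have hθ : Order.IsSuccLimit θ := Cardinal.isSuccLimit_ord hunc.le
  have ih2 : ∀ i : Ordinal.{u}, ∃ (B : Set α) (E : α → β), i ∈ S →
      B ⊆ ((T (i+1)).quot (T i)).M ∧ #(B : Set α) ≤ μ i ∧
      ((((T (i+1)).quot (T i)).erase B)).Espousal E := by
    intro i
    by_cases hi : i ∈ S
    · obtain ⟨B, hB1, hB2, E, hE⟩ := ih i hi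
      exact ⟨B, E, fun _ => ⟨hB1, hB2, hE⟩⟩
    · exact ⟨∅, fun _ => Classical.arbitrary β, fun h => absurd h hi⟩
  choose Bs Es hspec using ih2
  set Bset : Set α := ⋃ i ∈ S, Bs i with hBsetdef
  have hBsetmem : ∀ m : α, m ∈ Bset ↔ ∃ i ∈ S, m ∈ Bs i := by
    intro m; simp [hBsetdef]
  have hstg : ∀ i ∈ S, ∀ m ∈ Bs i, m ∈ (T θ).M ∧ towerStg T m = i := by
    intro i hi m hm
    exact (stageM_mem htower hθ (hstat.1 hi)).1 ((hspec i hi).1 hm)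
  have hBsetsub : Bset ⊆ (Society.unionLe T θ).M := by
    intro m hm
    obtain ⟨i, hi, hmi⟩ := (hBsetmem m).1 hm
    rw [unionLe_M htower]
    exact (hstg i hi m hmi).1
  refine ⟨Bset, hBsetsub, ?_, ?_⟩
  · -- cardinality bound
    have hrw : Bset = ⋃ t : θ.ToType, (if h : ((Ordinal.ToType.mk (o := θ)).symm t : Ordinal) ∈ S
        then Bs ((Ordinal.ToType.mk (o := θ)).symm t : Ordinal) else ∅) := by
      apply Set.Subset.antisymm
      · intro m hm
        obtain ⟨i, hi, hmi⟩ := (hBsetmem m).1 hm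
        have hilt : i < θ := hstat.1 hi
        refine Set.mem_iUnion.2 ⟨Ordinal.ToType.mk (o := θ) ⟨i, hilt⟩, ?_⟩
        rw [OrderIso.symm_apply_apply]
        rw [dif_pos hi]
        exact hmi
      · intro m hm
        obtain ⟨t, hmt⟩ := Set.mem_iUnion.1 hm
        by_cases h : ((Ordinal.ToType.mk (o := θ)).symm t : Ordinal) ∈ S
        · rw [dif_pos h] at hmt
          exact (hBsetmem m).2 ⟨_, h, hmt⟩
        · rw [dif_neg h] at hmt
          exact absurd hmt (Set.notMem_empty m)
    rw [hrw]
    refine le_trans (Cardinal.mk_iUnion_le _) ?_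
    have h1 : #θ.ToType = κ := by rw [Cardinal.mk_toType, hθdef, Cardinal.card_ord]
    have h2 : ⨆ t : θ.ToType, #((if h : ((Ordinal.ToType.mk (o := θ)).symm t : Ordinal) ∈ S
        then Bs ((Ordinal.ToType.mk (o := θ)).symm t : Ordinal) else ∅) : Set α) ≤ κ := by
      apply ciSup_le'
      intro t
      by_cases h : ((Ordinal.ToType.mk (o := θ)).symm t : Ordinal) ∈ S
      · rw [dif_pos h]
        exact le_trans ((hspec _ h).2.1) (hμ _ h).le
      · rw [dif_neg h]
        simp
    calc #θ.ToType * ⨆ t, _ ≤ κ * κ := by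
          rw [h1]; exact mul_le_mul_right h2 κ
      _ = κ := Cardinal.mul_eq_self hreg.aleph0_le
  · -- the espousal
    refine ⟨fun m => Es (towerStg T m) m, ?_, ?_⟩
    · rw [Society.erase_M, unionLe_M htower]
      intro x hx y hy hxy
      -- stage membership for x and y
      have hstep : ∀ z : α, z ∈ (T θ).M \ Bset → towerStg T z ∈ S ∧
          z ∈ ((T (towerStg T z + 1)).quot (T (towerStg T z))).M \ Bs (towerStg T z) ∧
          Es (towerStg T z) z ∈ (T θ).W ∧ towerWStg T (Es (towerStg T z) z) = towerStg T z := by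
        intro z hz
        have hzlt : towerStg T z < θ := (towerStg_spec htower hz.1).1
        have hzmem : z ∈ ((T (towerStg T z + 1)).quot (T (towerStg T z))).M :=
          (stageM_mem htower hθ hzlt).2 ⟨hz.1, rfl⟩
        have hzS : towerStg T z ∈ S := by
          by_contra hzS
          obtain ⟨w, _, hw⟩ := hoff _ hzlt hzS
          rw [hw] at hzmem
          exact hzmem
        have hznB : z ∉ Bs (towerStg T z) := by
          intro hc
          exact hz.2 ((hBsetmem z).2 ⟨_, hzS, hc⟩)
        have hesp := (hspec _ hzS).2.2
        have hzmem' : z ∈ (((T (towerStg T z + 1)).quot (T (towerStg T z))).erase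
            (Bs (towerStg T z))).M := by
          rw [Society.erase_M]; exact ⟨hzmem, hznB⟩
        have hedge := hesp.2 z hzmem'
        rw [Society.mem_erase_K] at hedge
        have hvW := (((T (towerStg T z + 1)).quot (T (towerStg T z))).K_mem _ hedge.1).2
        have := (stageW_mem htower hθ hzlt).1 hvW
        exact ⟨hzS, ⟨hzmem, hznB⟩, this.1, this.2⟩
      obtain ⟨hxS, hxmem, hxvW, hxvstg⟩ := hstep x hx
      obtain ⟨hyS, hymem, hyvW, hyvstg⟩ := hstep y hy
      have hxy' : Es (towerStg T x) x = Es (towerStg T y) y := hxy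
      have hstgeq : towerStg T x = towerStg T y := by
        rw [← hxvstg, ← hyvstg, hxy']
      have hesp := (hspec _ hxS).2.2
      have hinj := hesp.1
      rw [Society.erase_M] at hinj
      refine hinj ?_ ?_ ?_
      · exact ⟨hxmem.1, hxmem.2⟩
      · rw [hstgeq]; exact ⟨hymem.1, hymem.2⟩
      · rw [← hstgeq] at hxy'
        exact hxy'
    · intro m hm
      rw [Society.erase_M, unionLe_M htower] at hm
      have hmlt : towerStg T m < θ := (towerStg_spec htower hm.1).1
      have hmmem : m ∈ ((T (towerStg T m + 1)).quot (T (towerStg T m))).M :=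
        (stageM_mem htower hθ hmlt).2 ⟨hm.1, rfl⟩
      have hmS : towerStg T m ∈ S := by
        by_contra hmS
        obtain ⟨w, _, hw⟩ := hoff _ hmlt hmS
        rw [hw] at hmmem
        exact hmmem
      have hmnB : m ∉ Bs (towerStg T m) := by
        intro hc
        exact hm.2 ((hBsetmem m).2 ⟨_, hmS, hc⟩)
      have hesp := (hspec _ hmS).2.2
      have hmmem' : m ∈ (((T (towerStg T m + 1)).quot (T (towerStg T m))).erase
          (Bs (towerStg T m))).M := by
        rw [Society.erase_M]; exact ⟨hmmem, hmnB⟩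
      have hedge := hesp.2 m hmmem'
      rw [Society.mem_erase_K] at hedge
      rw [Society.mem_erase_K]
      constructor
      · -- edge lies in the union society
        have h1 : (m, Es (towerStg T m) m) ∈ ((T (towerStg T m + 1)).quot
            (T (towerStg T m))).K := hedge.1
        rw [Society.mem_quot_K] at h1
        rw [unionLe_K htower]
        exact tower_K_mono htower (ord_add_one_le_of_lt hmlt) le_rfl h1.1
      · exact hm.2

/-! ### The large case, lower bound -/

theorem large_P2 {α β : Type u} {Λ : Society α β} {T : Ordinal.{u} → Society α β}
    {S : Set Ordinal.{u}} {κ : Cardinal.{u}} (hreg : κ.IsRegular) (hunc : ℵ₀ < κ)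
    (htower : Society.IsTower Λ κ.ord T)
    (μ : Ordinal.{u} → Cardinal.{u}) (hμ1 : ∀ i ∈ S, 1 ≤ μ i)
    (hoff : ∀ i < κ.ord, i ∉ S → ∃ w ∈ Λ.W, (T (i + 1)).quot (T i) = Society.singletonW w)
    (hstat : IsStationaryIn S κ.ord)
    (ih : ∀ i ∈ S, ∀ B' ⊆ ((T (i+1)).quot (T i)).M, ∀ E' : α → β,
      ((((T (i+1)).quot (T i)).erase B')).Espousal E' →
      μ i + #((((T (i+1)).quot (T i)).W \ E' '' (((T (i+1)).quot (T i)).M \ B')) : Set β)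
        ≤ #(B' : Set α))
    {B : Set α} (hB : B ⊆ (Society.unionLe T κ.ord).M) {E : α → β}
    (hE : ((Society.unionLe T κ.ord).erase B).Espousal E) :
    κ + #(((Society.unionLe T κ.ord).W \ E '' ((Society.unionLe T κ.ord).M \ B)) : Set β)
      ≤ #(B : Set α) := by
  classical
  rw [unionLe_W htower, unionLe_M htower]
  set θ := κ.ord with hθdef
  have hθ : Order.IsSuccLimit θ := Cardinal.isSuccLimit_ord hunc.le
  have hθ0 : (0 : Ordinal.{u}) < θ := hθ.pos
  have hcof : θ.cof = κ := hreg.cof_eq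
  have hSIio : S ⊆ Set.Iio θ := hstat.1
  rw [unionLe_M htower] at hB
  have hEinj : Set.InjOn E ((T θ).M \ B) := by
    have := hE.1; rwa [Society.erase_M, unionLe_M htower] at this
  have hEK : ∀ m ∈ (T θ).M \ B, (m, E m) ∈ Λ.K := by
    intro m hm
    have h := hE.2 m (by rw [Society.erase_M, unionLe_M htower]; exact hm)
    rw [Society.mem_erase_K] at h
    have h2 := h.1
    rw [unionLe_K htower] at h2
    exact tower_K_sub htower le_rfl h2
  have hEWθ : ∀ m ∈ (T θ).M \ B, E m ∈ (T θ).W := fun m hm =>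
    tower_sat htower le_rfl (hEK m hm) hm.1
  set U : Set β := (T θ).W \ E '' ((T θ).M \ B) with hUdef
  set Ψ : Ordinal.{u} → Society α β := fun i => (T (i+1)).quot (T i) with hΨdef
  set D : Set α := {m | m ∈ (T θ).M ∧ m ∉ B ∧ E m ∈ (T (towerStg T m)).W} with hDdef
  set Bst : Ordinal.{u} → Set α := fun i => (B ∪ D) ∩ (Ψ i).M with hBstdef
  set Ust : Ordinal.{u} → Set β := fun i => (Ψ i).W \ E '' ((Ψ i).M \ Bst i) with hUstdef
  -- basic stage facts
  have hDMB : ∀ b ∈ D, b ∈ (T θ).M \ B := fun b hb => ⟨hb.1, hb.2.1⟩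
  have hΨMms : ∀ i, i < θ → ∀ m ∈ (Ψ i).M, m ∈ (T θ).M ∧ towerStg T m = i :=
    fun i hi m hm => (stageM_mem htower hθ hi).1 hm
  have hΨWms : ∀ i, i < θ → ∀ w ∈ (Ψ i).W, w ∈ (T θ).W ∧ towerWStg T w = i :=
    fun i hi w hw => (stageW_mem htower hθ hi).1 hw
  have hBstmem : ∀ i, i < θ → ∀ b ∈ Bst i, b ∈ (T θ).M ∧ towerStg T b = i ∧
      (b ∈ B ∨ b ∈ D) := by
    intro i hi b hb
    obtain ⟨h1, h2⟩ := hΨMms i hi b hb.2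
    exact ⟨h1, h2, hb.1⟩
  have hBnotBst : ∀ i, ∀ m ∈ (Ψ i).M, m ∉ Bst i → m ∉ B := by
    intro i m hm hc hmB
    exact hc ⟨Or.inl hmB, hm⟩
  -- the stage espousal
  have hstres : ∀ i ∈ S, ((Ψ i).erase (Bst i)).Espousal E := by
    intro i hi
    have hilt : i < θ := hSIio hi
    constructor
    · rw [Society.erase_M]
      intro x hx y hy hxy
      have hx' : x ∈ (T θ).M \ B :=
        ⟨(hΨMms i hilt x hx.1).1, hBnotBst i x hx.1 hx.2⟩
      have hy' : y ∈ (T θ).M \ B :=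
        ⟨(hΨMms i hilt y hy.1).1, hBnotBst i y hy.1 hy.2⟩
      exact hEinj hx' hy' hxy
    · intro m hm
      rw [Society.erase_M] at hm
      have hm' : m ∈ (T θ).M \ B :=
        ⟨(hΨMms i hilt m hm.1).1, hBnotBst i m hm.1 hm.2⟩
      have hmD : m ∉ D := by
        intro hmD
        exact hm.2 ⟨Or.inr hmD, hm.1⟩
      have hstg : towerStg T m = i := (hΨMms i hilt m hm.1).2
      have hEm : E m ∉ (T i).W := by
        intro hc
        apply hmD
        refine ⟨hm'.1, hm'.2, ?_⟩
        rw [hstg]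
        exact hc
      rw [Society.mem_erase_K]
      exact ⟨stageK_mem htower hθ hilt (hEK m hm') hm.1 hEm, hm.2⟩
  -- the stage inequalities and injections
  have hIneq : ∀ i ∈ S, 1 + #(Ust i : Set β) ≤ #(Bst i : Set α) := by
    intro i hi
    calc 1 + #(Ust i : Set β) ≤ μ i + #(Ust i : Set β) := add_le_add_left (hμ1 i hi) _
      _ ≤ #(Bst i : Set α) := ih i hi (Bst i) Set.inter_subset_right E (hstres i hi)
  have jex : ∀ i, i ∈ S → Nonempty (Option ↥(Ust i) ↪ ↥(Bst i)) := by
    intro i hi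
    rw [← Cardinal.le_def, Cardinal.mk_option, add_comm]
    exact hIneq i hi
  let jf : ∀ i, i ∈ S → (Option ↥(Ust i) ↪ ↥(Bst i)) := fun i hi => (jex i hi).some
  -- transport lemma for jf across equal indices
  have Hj : ∀ (i i' : Ordinal.{u}), i = i' → ∀ (hi : i ∈ S) (hi' : i' ∈ S)
      (o : Option ↥(Ust i)) (o' : Option ↥(Ust i')),
      ((jf i hi o : ↥(Bst i)) : α) = ((jf i' hi' o' : ↥(Bst i')) : α) →
      Option.map (Subtype.val) o = Option.map Subtype.val o' := by
    intro i i' hii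
    subst hii
    intro hi hi' o o' hval
    have := (jf i hi).injective (Subtype.ext hval)
    rw [this]
  -- validity
  set Valid : β → Prop := fun w => w ∈ (T θ).W ∧ w ∈ Ust (towerWStg T w) with hValiddef
  have hVlt : ∀ w, Valid w → towerWStg T w < θ := fun w hw => (towerWStg_spec htower hw.1).1
  have hValidU : ∀ u ∈ U, Valid u := by
    intro u hu
    refine ⟨hu.1, ?_, ?_⟩
    · have hs := towerWStg_spec htower hu.1
      exact (stageW_mem htower hθ hs.1).2 ⟨hu.1, rfl⟩
    · rintro ⟨m, hm, hme⟩
      have hlt : towerWStg T u < θ := (towerWStg_spec htower hu.1).1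
      have hm' : m ∈ (T θ).M \ B :=
        ⟨(hΨMms _ hlt m hm.1).1, hBnotBst _ m hm.1 hm.2⟩
      exact hu.2 ⟨m, hm', hme⟩
  have hDstg : ∀ b ∈ D, towerWStg T (E b) < towerStg T b := by
    intro b hb
    have hbθ : towerStg T b < θ := (towerStg_spec htower hb.1).1
    exact towerWStg_lt htower (hEWθ b (hDMB b hb)) hbθ.le hb.2.2
  have hValidD : ∀ b ∈ D, Valid (E b) := by
    intro b hb
    have hEbW : E b ∈ (T θ).W := hEWθ b (hDMB b hb)
    refine ⟨hEbW, ?_, ?_⟩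
    · have hs := towerWStg_spec htower hEbW
      exact (stageW_mem htower hθ hs.1).2 ⟨hEbW, rfl⟩
    · rintro ⟨m, hm, hme⟩
      have hlt : towerWStg T (E b) < θ := (towerWStg_spec htower hEbW).1
      have hm' : m ∈ (T θ).M \ B :=
        ⟨(hΨMms _ hlt m hm.1).1, hBnotBst _ m hm.1 hm.2⟩
      have hmb : m = b := hEinj hm' (hDMB b hb) hme
      have h1 : towerStg T m = towerWStg T (E b) := (hΨMms _ hlt m hm.1).2
      rw [hmb] at h1
      exact absurd h1 (ne_of_gt (hDstg b hb))
  -- data for the chase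
  have hsomemem : ∀ w, ∀ h : Valid w ∧ towerWStg T w ∈ S, w ∈ Ust (towerWStg T w) :=
    fun w h => h.1.2
  have hdec : ∀ (w : β) (h : Valid w ∧ towerWStg T w ∈ S),
      ((jf (towerWStg T w) h.2 (some ⟨w, h.1.2⟩) : ↥(Bst (towerWStg T w))) : α) ∈ D →
      towerWStg T (E ((jf (towerWStg T w) h.2 (some ⟨w, h.1.2⟩) :
        ↥(Bst (towerWStg T w))) : α)) < towerWStg T w := by
    intro w h hd
    have hwθ : towerWStg T w < θ := hVlt w h.1
    have hstg := (hBstmem _ hwθ _ (jf (towerWStg T w) h.2 (some ⟨w, h.1.2⟩)).2).2.1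
    calc towerWStg T (E _) < towerStg T _ := hDstg _ hd
      _ = towerWStg T w := hstg
  have hBcase : ∀ (w : β) (h : Valid w ∧ towerWStg T w ∈ S),
      ((jf (towerWStg T w) h.2 (some ⟨w, h.1.2⟩) : ↥(Bst (towerWStg T w))) : α) ∉ D →
      ((jf (towerWStg T w) h.2 (some ⟨w, h.1.2⟩) : ↥(Bst (towerWStg T w))) : α) ∈ B := by
    intro w h hd
    rcases (jf (towerWStg T w) h.2 (some ⟨w, h.1.2⟩)).2.1 with hb | hb
    · exact hb
    · exact absurd hb hd
  have hwf : WellFounded (fun v w : β => towerWStg T v < towerWStg T w) :=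
    InvImage.wf _ Ordinal.lt_wf
  -- the chase
  obtain ⟨chase, chase_eq⟩ : ∃ chase : β → ↥B ⊕ Ordinal.{u}, ∀ w, chase w =
      if h : Valid w ∧ towerWStg T w ∈ S then
        (if hd : ((jf (towerWStg T w) h.2 (some ⟨w, h.1.2⟩) :
            ↥(Bst (towerWStg T w))) : α) ∈ D then
          chase (E ((jf (towerWStg T w) h.2 (some ⟨w, h.1.2⟩) :
            ↥(Bst (towerWStg T w))) : α))
        else Sum.inl ⟨_, hBcase w h hd⟩)
      else Sum.inr (towerWStg T w) := by
    refine ⟨hwf.fix (fun w rec =>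
      if h : Valid w ∧ towerWStg T w ∈ S then
        (if hd : ((jf (towerWStg T w) h.2 (some ⟨w, h.1.2⟩) :
            ↥(Bst (towerWStg T w))) : α) ∈ D then
          rec _ (hdec w h hd)
        else Sum.inl ⟨_, hBcase w h hd⟩)
      else Sum.inr (towerWStg T w)), fun w => ?_⟩
    exact hwf.fix_eq _ w
  have chase_neg : ∀ w, ¬(Valid w ∧ towerWStg T w ∈ S) → chase w = Sum.inr (towerWStg T w) := by
    intro w h; rw [chase_eq w, dif_neg h]
  have chase_stepD : ∀ w (h : Valid w ∧ towerWStg T w ∈ S)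
      (hd : ((jf (towerWStg T w) h.2 (some ⟨w, h.1.2⟩) : ↥(Bst (towerWStg T w))) : α) ∈ D),
      chase w = chase (E ((jf (towerWStg T w) h.2 (some ⟨w, h.1.2⟩) :
        ↥(Bst (towerWStg T w))) : α)) := by
    intro w h hd; rw [chase_eq w, dif_pos h, dif_pos hd]
  have chase_stepB : ∀ w (h : Valid w ∧ towerWStg T w ∈ S)
      (hd : ((jf (towerWStg T w) h.2 (some ⟨w, h.1.2⟩) : ↥(Bst (towerWStg T w))) : α) ∉ D),
      chase w = Sum.inl ⟨_, hBcase w h hd⟩ := by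
    intro w h hd; rw [chase_eq w, dif_pos h, dif_neg hd]
  -- the step relation
  set st : β → β → Prop := fun w v => ∃ h : Valid w ∧ towerWStg T w ∈ S,
    ∃ _ : ((jf (towerWStg T w) h.2 (some ⟨w, h.1.2⟩) : ↥(Bst (towerWStg T w))) : α) ∈ D,
    v = E ((jf (towerWStg T w) h.2 (some ⟨w, h.1.2⟩) : ↥(Bst (towerWStg T w))) : α)
    with hstdef
  have st_chase : ∀ w v, st w v → chase w = chase v := by
    rintro w v ⟨h, hd, rfl⟩
    exact chase_stepD w h hd
  have st_valid : ∀ w v, st w v → Valid v ∧ towerWStg T v < towerWStg T w := by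
    rintro w v ⟨h, hd, rfl⟩
    exact ⟨hValidD _ hd, hdec w h hd⟩
  have st_runiq : Relator.RightUnique st := by
    rintro w v v' ⟨h, hd, rfl⟩ ⟨h', hd', rfl⟩
    rfl
  have st_codet : ∀ w w' v, st w v → st w' v → w = w' := by
    rintro w w' v ⟨h, hd, rfl⟩ ⟨h', hd', hvv⟩
    have hwθ : towerWStg T w < θ := hVlt w h.1
    have hw'θ : towerWStg T w' < θ := hVlt w' h'.1
    have hbeq : ((jf (towerWStg T w') h'.2 (some ⟨w', h'.1.2⟩) :
        ↥(Bst (towerWStg T w'))) : α) =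
        ((jf (towerWStg T w) h.2 (some ⟨w, h.1.2⟩) : ↥(Bst (towerWStg T w))) : α) := by
      apply hEinj
      · exact hDMB _ hd'
      · exact hDMB _ hd
      · exact hvv.symm
    have hstg1 := (hBstmem _ hwθ _ (jf (towerWStg T w) h.2 (some ⟨w, h.1.2⟩)).2).2.1
    have hstg2 := (hBstmem _ hw'θ _ (jf (towerWStg T w') h'.2 (some ⟨w', h'.1.2⟩)).2).2.1
    have hieq : towerWStg T w' = towerWStg T w := by
      rw [← hstg2, ← hstg1, hbeq]
    have := Hj _ _ hieq h'.2 h.2 (some ⟨w', h'.1.2⟩) (some ⟨w, h.1.2⟩) hbeq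
    simp only [Option.map_some, Option.some.injEq] at this
    exact this.symm
  -- results of the chase
  have Linl : ∀ (o : Ordinal.{u}) (w : β), towerWStg T w = o → Valid w →
      ∀ bb : ↥B, chase w = Sum.inl bb → ∃ v, Relation.ReflTransGen st w v ∧
      ∃ h : Valid v ∧ towerWStg T v ∈ S,
        (bb : α) = ((jf (towerWStg T v) h.2 (some ⟨v, h.1.2⟩) : ↥(Bst (towerWStg T v))) : α) := by
    intro o
    induction o using Ordinal.induction with
    | h o iho =>
      intro w hwo hw bb hch
      by_cases h : Valid w ∧ towerWStg T w ∈ S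
      · by_cases hd : ((jf (towerWStg T w) h.2 (some ⟨w, h.1.2⟩) :
            ↥(Bst (towerWStg T w))) : α) ∈ D
        · rw [chase_stepD w h hd] at hch
          obtain ⟨v, hrt, hex⟩ := iho _ (hwo ▸ hdec w h hd) _ rfl (hValidD _ hd) bb hch
          exact ⟨v, Relation.ReflTransGen.head ⟨h, hd, rfl⟩ hrt, hex⟩
        · rw [chase_stepB w h hd] at hch
          have := Sum.inl.inj hch
          exact ⟨w, Relation.ReflTransGen.refl, h, by rw [← this]⟩
      · rw [chase_neg w h] at hch
        exact absurd hch (by simp)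
  have Linr : ∀ (o : Ordinal.{u}) (w : β), towerWStg T w = o → Valid w →
      ∀ i : Ordinal.{u}, chase w = Sum.inr i → i ≤ towerWStg T w ∧ i < θ ∧ i ∉ S ∧
      ∃ v, Relation.ReflTransGen st w v ∧ Valid v ∧ towerWStg T v = i := by
    intro o
    induction o using Ordinal.induction with
    | h o iho =>
      intro w hwo hw i hch
      by_cases h : Valid w ∧ towerWStg T w ∈ S
      · by_cases hd : ((jf (towerWStg T w) h.2 (some ⟨w, h.1.2⟩) :
            ↥(Bst (towerWStg T w))) : α) ∈ D
        · rw [chase_stepD w h hd] at hch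
          obtain ⟨h1, h2, h3, v, hrt, hv⟩ := iho _ (hwo ▸ hdec w h hd) _ rfl (hValidD _ hd) i hch
          exact ⟨le_trans h1 (hdec w h hd).le, h2, h3,
            v, Relation.ReflTransGen.head ⟨h, hd, rfl⟩ hrt, hv⟩
        · rw [chase_stepB w h hd] at hch
          exact absurd hch (by simp)
      · rw [chase_neg w h] at hch
        have hiw : i = towerWStg T w := (Sum.inr.inj hch).symm
        have hwS : towerWStg T w ∉ S := fun hc => h ⟨hw, hc⟩
        exact ⟨hiw.le, hiw ▸ hVlt w hw, hiw ▸ hwS, w, Relation.ReflTransGen.refl, hw, hiw.symm⟩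
  -- meeting lemma
  have Lmeet : ∀ (o : Ordinal.{u} × Ordinal.{u}) (w w' : β), (towerWStg T w, towerWStg T w') = o →
      Valid w → Valid w' → chase w = chase w' →
      ∃ v, Relation.ReflTransGen st w v ∧ Relation.ReflTransGen st w' v := by
    intro o
    induction o using WellFoundedLT.induction with
    | ind o iho =>
      intro w w' hwo hw hw' hch
      by_cases h1 : towerWStg T w ∈ S
      · by_cases hd1 : ((jf (towerWStg T w) (And.intro hw h1).2 (some ⟨w, hw.2⟩) :
            ↥(Bst (towerWStg T w))) : α) ∈ D
        · obtain ⟨x, hst⟩ : ∃ x, st w x := ⟨_, ⟨hw, h1⟩, hd1, rfl⟩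
          have hch2 : chase x = chase w' := by
            rw [← st_chase _ _ hst]; exact hch
          have hlt : (towerWStg T x, towerWStg T w') < o := by
            rw [← hwo]
            exact Prod.mk_lt_mk_iff_left.2 (st_valid _ _ hst).2
          obtain ⟨v, r1, r2⟩ := iho _ hlt _ _ rfl (st_valid _ _ hst).1 hw' hch2
          exact ⟨v, Relation.ReflTransGen.head hst r1, r2⟩
        · -- chase w is inl
          by_cases h2 : towerWStg T w' ∈ S
          · by_cases hd2 : ((jf (towerWStg T w') (And.intro hw' h2).2 (some ⟨w', hw'.2⟩) :
                ↥(Bst (towerWStg T w'))) : α) ∈ D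
            · obtain ⟨x, hst⟩ : ∃ x, st w' x := ⟨_, ⟨hw', h2⟩, hd2, rfl⟩
              have hch2 : chase w = chase x := by
                rw [st_chase _ _ hst] at hch; exact hch
              have hlt : (towerWStg T w, towerWStg T x) < o := by
                rw [← hwo]
                exact Prod.mk_lt_mk_iff_right.2 (st_valid _ _ hst).2
              obtain ⟨v, r1, r2⟩ := iho _ hlt _ _ rfl hw (st_valid _ _ hst).1 hch2
              exact ⟨v, r1, Relation.ReflTransGen.head hst r2⟩
            · -- both inl
              rw [chase_stepB w ⟨hw, h1⟩ hd1, chase_stepB w' ⟨hw', h2⟩ hd2] at hch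
              have hbeq := Sum.inl.inj hch
              have hval : ((jf (towerWStg T w) h1 (some ⟨w, hw.2⟩) :
                  ↥(Bst (towerWStg T w))) : α) =
                  ((jf (towerWStg T w') h2 (some ⟨w', hw'.2⟩) :
                  ↥(Bst (towerWStg T w'))) : α) := congrArg Subtype.val hbeq
              have hstg1 := (hBstmem _ (hVlt w hw) _
                (jf (towerWStg T w) h1 (some ⟨w, hw.2⟩)).2).2.1
              have hstg2 := (hBstmem _ (hVlt w' hw') _
                (jf (towerWStg T w') h2 (some ⟨w', hw'.2⟩)).2).2.1
              have hieq : towerWStg T w = towerWStg T w' := by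
                rw [← hstg1, ← hstg2, hval]
              have := Hj _ _ hieq h1 h2 (some ⟨w, hw.2⟩) (some ⟨w', hw'.2⟩) hval
              simp only [Option.map_some, Option.some.injEq] at this
              rw [this]
              exact ⟨w', Relation.ReflTransGen.refl, Relation.ReflTransGen.refl⟩
          · rw [chase_stepB w ⟨hw, h1⟩ hd1, chase_neg w' (fun hc => h2 hc.2)] at hch
            exact absurd hch (by simp)
      · -- chase w is inr
        by_cases h2 : towerWStg T w' ∈ S
        · by_cases hd2 : ((jf (towerWStg T w') (And.intro hw' h2).2 (some ⟨w', hw'.2⟩) :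
              ↥(Bst (towerWStg T w'))) : α) ∈ D
          · obtain ⟨x, hst⟩ : ∃ x, st w' x := ⟨_, ⟨hw', h2⟩, hd2, rfl⟩
            have hch2 : chase w = chase x := by
              rw [st_chase _ _ hst] at hch; exact hch
            have hlt : (towerWStg T w, towerWStg T x) < o := by
              rw [← hwo]
              exact Prod.mk_lt_mk_iff_right.2 (st_valid _ _ hst).2
            obtain ⟨v, r1, r2⟩ := iho _ hlt _ _ rfl hw (st_valid _ _ hst).1 hch2
            exact ⟨v, r1, Relation.ReflTransGen.head hst r2⟩
          · rw [chase_neg w (fun hc => h1 hc.2), chase_stepB w' ⟨hw', h2⟩ hd2] at hch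
            exact absurd hch (by simp)
        · -- both inr
          rw [chase_neg w (fun hc => h1 hc.2), chase_neg w' (fun hc => h2 hc.2)] at hch
          have hieq : towerWStg T w = towerWStg T w' := Sum.inr.inj hch
          have hwθ : towerWStg T w < θ := hVlt w hw
          obtain ⟨w0, _, hw0⟩ := hoff _ hwθ h1
          have hwmem : w ∈ (Ψ (towerWStg T w)).W := hw.2.1
          have hw'mem : w' ∈ (Ψ (towerWStg T w)).W := by
            rw [hieq]; exact hw'.2.1
          rw [hΨdef] at hwmem hw'mem
          simp only [hw0] at hwmem hw'mem
          have : w = w' := by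
            rw [show w = w0 from hwmem, show w' = w0 from hw'mem]
          rw [this]
          exact ⟨w', Relation.ReflTransGen.refl, Relation.ReflTransGen.refl⟩
  -- no predecessors for starts
  have hnopredU : ∀ u ∈ U, ∀ x, ¬ st x u := by
    rintro u hu x ⟨h, hd, hval⟩
    exact hu.2 ⟨_, hDMB _ hd, hval.symm⟩
  have hnopredTok : ∀ i (hi : i ∈ S), ((jf i hi none : ↥(Bst i)) : α) ∈ D →
      ∀ x, ¬ st x (E ((jf i hi none : ↥(Bst i)) : α)) := by
    rintro i hi htokD x ⟨h, hd, hval⟩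
    have hxθ : towerWStg T x < θ := hVlt x h.1
    have hbeq : ((jf (towerWStg T x) h.2 (some ⟨x, h.1.2⟩) : ↥(Bst (towerWStg T x))) : α) =
        ((jf i hi none : ↥(Bst i)) : α) :=
      hEinj (hDMB _ hd) (hDMB _ htokD) hval.symm
    have hstg1 := (hBstmem _ hxθ _ (jf (towerWStg T x) h.2 (some ⟨x, h.1.2⟩)).2).2.1
    have hstg2 := (hBstmem _ (hSIio hi) _ (jf i hi none).2).2.1
    have hieq : towerWStg T x = i := by rw [← hstg1, ← hstg2, hbeq]
    have := Hj _ _ hieq h.2 hi (some ⟨x, h.1.2⟩) none hbeq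
    simp at this
  -- merging of two starts
  have hmerge : ∀ x x' v, (∀ y, ¬ st y x) → (∀ y, ¬ st y x') →
      Relation.ReflTransGen st x v → Relation.ReflTransGen st x' v → x = x' := by
    intro x x' v hx hx' r1 r2
    have hswap : Relator.RightUnique (Function.swap st) := fun a b c h h' => st_codet _ _ _ h h'
    rcases Relation.ReflTransGen.total_of_right_unique hswap r1.swap r2.swap with h | h
    · rcases Relation.ReflTransGen.cases_head h with h' | ⟨c, hc, _⟩
      · exact h'
      · exact absurd hc (hx c)
    · rcases Relation.ReflTransGen.cases_head h with h' | ⟨c, hc, _⟩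
      · exact h'.symm
      · exact absurd hc (hx' c)
  -- token facts
  have htokB : ∀ i (hi : i ∈ S), ((jf i hi none : ↥(Bst i)) : α) ∉ D →
      ((jf i hi none : ↥(Bst i)) : α) ∈ B := by
    intro i hi hd
    rcases (jf i hi none).2.1 with hb | hb
    · exact hb
    · exact absurd hb hd
  have htokstg : ∀ i (hi : i ∈ S), towerStg T ((jf i hi none : ↥(Bst i)) : α) = i :=
    fun i hi => (hBstmem _ (hSIio hi) _ (jf i hi none).2).2.1
  have hInlTok : ∀ i (hi : i ∈ S) (w : β), Valid w → ∀ bb : ↥B,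
      chase w = Sum.inl bb → (bb : α) = ((jf i hi none : ↥(Bst i)) : α) → False := by
    intro i hi w hw bb hch hbv
    obtain ⟨v, _, h, hv⟩ := Linl _ w rfl hw bb hch
    have hvθ : towerWStg T v < θ := hVlt v h.1
    have hstg1 := (hBstmem _ hvθ _ (jf (towerWStg T v) h.2 (some ⟨v, h.1.2⟩)).2).2.1
    have hieq : towerWStg T v = i := by
      rw [← hstg1, ← htokstg i hi, ← hv, hbv]
    have := Hj _ _ hieq h.2 hi (some ⟨v, h.1.2⟩) none (hv.symm.trans hbv)
    simp at this
  -- the trace function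
  obtain ⟨Trace, hTrinl, hTrinr⟩ : ∃ Tr : ↥S ⊕ ↥U → ↥B ⊕ Ordinal.{u},
      (∀ i : ↥S, Tr (Sum.inl i) =
        if hd : ((jf i.1 i.2 none : ↥(Bst i.1)) : α) ∈ D then
          chase (E ((jf i.1 i.2 none : ↥(Bst i.1)) : α))
        else Sum.inl ⟨((jf i.1 i.2 none : ↥(Bst i.1)) : α), htokB i.1 i.2 hd⟩) ∧
      (∀ u : ↥U, Tr (Sum.inr u) = chase (u : β)) := by
    refine ⟨Sum.elim (fun i : ↥S =>
      if hd : ((jf i.1 i.2 none : ↥(Bst i.1)) : α) ∈ D then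
        chase (E ((jf i.1 i.2 none : ↥(Bst i.1)) : α))
      else Sum.inl ⟨((jf i.1 i.2 none : ↥(Bst i.1)) : α), htokB i.1 i.2 hd⟩)
      (fun u : ↥U => chase (u : β)), fun i => rfl, fun u => rfl⟩
  -- injectivity of the trace
  have hTinj : Function.Injective Trace := by
    intro d d' he
    cases d with
    | inl i =>
      cases d' with
      | inl i' =>
        rw [hTrinl i, hTrinl i'] at he
        by_cases hd : ((jf i.1 i.2 none : ↥(Bst i.1)) : α) ∈ D <;>
          by_cases hd' : ((jf i'.1 i'.2 none : ↥(Bst i'.1)) : α) ∈ D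
        · rw [dif_pos hd, dif_pos hd'] at he
          obtain ⟨v, r1, r2⟩ := Lmeet _ _ _ rfl (hValidD _ hd) (hValidD _ hd') he
          have := hmerge _ _ v (hnopredTok i.1 i.2 hd) (hnopredTok i'.1 i'.2 hd') r1 r2
          have hbeq : ((jf i.1 i.2 none : ↥(Bst i.1)) : α) =
              ((jf i'.1 i'.2 none : ↥(Bst i'.1)) : α) :=
            hEinj (hDMB _ hd) (hDMB _ hd') this
          have : i.1 = i'.1 := by
            rw [← htokstg i.1 i.2, ← htokstg i'.1 i'.2, hbeq]
          exact congrArg Sum.inl (Subtype.ext this)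
        · rw [dif_pos hd, dif_neg hd'] at he
          exact (hInlTok i'.1 i'.2 _ (hValidD _ hd) _ he rfl).elim
        · rw [dif_neg hd, dif_pos hd'] at he
          exact (hInlTok i.1 i.2 _ (hValidD _ hd') _ he.symm rfl).elim
        · rw [dif_neg hd, dif_neg hd'] at he
          have hbeq : ((jf i.1 i.2 none : ↥(Bst i.1)) : α) =
              ((jf i'.1 i'.2 none : ↥(Bst i'.1)) : α) :=
            congrArg Subtype.val (Sum.inl.inj he)
          have : i.1 = i'.1 := by
            rw [← htokstg i.1 i.2, ← htokstg i'.1 i'.2, hbeq]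
          exact congrArg Sum.inl (Subtype.ext this)
      | inr uu =>
        exfalso
        rw [hTrinl i, hTrinr uu] at he
        by_cases hd : ((jf i.1 i.2 none : ↥(Bst i.1)) : α) ∈ D
        · rw [dif_pos hd] at he
          obtain ⟨v, r1, r2⟩ := Lmeet _ _ _ rfl (hValidD _ hd) (hValidU _ uu.2) he
          have := hmerge _ _ v (hnopredTok i.1 i.2 hd) (hnopredU _ uu.2) r1 r2
          exact uu.2.2 ⟨_, hDMB _ hd, this⟩
        · rw [dif_neg hd] at he
          exact hInlTok i.1 i.2 _ (hValidU _ uu.2) _ he.symm rfl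
    | inr uu =>
      cases d' with
      | inl i =>
        exfalso
        rw [hTrinl i, hTrinr uu] at he
        by_cases hd : ((jf i.1 i.2 none : ↥(Bst i.1)) : α) ∈ D
        · rw [dif_pos hd] at he
          obtain ⟨v, r1, r2⟩ := Lmeet _ _ _ rfl (hValidU _ uu.2) (hValidD _ hd) he
          have := hmerge _ _ v (hnopredU _ uu.2) (hnopredTok i.1 i.2 hd) r1 r2
          exact uu.2.2 ⟨_, hDMB _ hd, this.symm⟩
        · rw [dif_neg hd] at he
          exact hInlTok i.1 i.2 _ (hValidU _ uu.2) _ he rfl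
      | inr uu' =>
        rw [hTrinr uu, hTrinr uu'] at he
        obtain ⟨v, r1, r2⟩ := Lmeet _ _ _ rfl (hValidU _ uu.2) (hValidU _ uu'.2) he
        exact congrArg Sum.inr
          (Subtype.ext (hmerge _ _ v (hnopredU _ uu.2) (hnopredU _ uu'.2) r1 r2))
  -- total trace on ordinals
  set TR : Ordinal.{u} → ↥B ⊕ Ordinal.{u} := fun i =>
    if hi : i ∈ S then Trace (Sum.inl ⟨i, hi⟩) else Sum.inr 0 with hTRdef
  have hTR : ∀ i (hi : i ∈ S), TR i = Trace (Sum.inl ⟨i, hi⟩) := by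
    intro i hi; rw [hTRdef]; exact dif_pos hi
  set S1 : Set Ordinal.{u} := {i | i ∈ S ∧ ∃ bb : ↥B, TR i = Sum.inl bb} with hS1def
  set S2 : Set Ordinal.{u} := S \ S1 with hS2def
  have hS2γ : ∀ i ∈ S2, ∃ γ, TR i = Sum.inr γ ∧ γ < i := by
    intro i hi
    rcases hTRi : TR i with bb | γ
    · exact absurd ⟨hi.1, bb, hTRi⟩ hi.2
    · refine ⟨γ, rfl, ?_⟩
      rw [hTR i hi.1, hTrinl ⟨i, hi.1⟩] at hTRi
      by_cases hd : ((jf i hi.1 none : ↥(Bst i)) : α) ∈ D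
      · rw [dif_pos hd] at hTRi
        have hres := Linr _ _ rfl (hValidD _ hd) γ hTRi
        calc γ ≤ towerWStg T (E ((jf i hi.1 none : ↥(Bst i)) : α)) := hres.1
          _ < towerStg T ((jf i hi.1 none : ↥(Bst i)) : α) := hDstg _ hd
          _ = i := htokstg i hi.1
      · rw [dif_neg hd] at hTRi
        exact absurd hTRi (by simp)
  have hS2γ' : ∀ i, ∃ γ, i ∈ S2 → (TR i = Sum.inr γ ∧ γ < i) := by
    intro i
    by_cases hi : i ∈ S2
    · obtain ⟨γ, h⟩ := hS2γ i hi; exact ⟨γ, fun _ => h⟩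
    · exact ⟨0, fun h => absurd h hi⟩
  choose γf hγf using hS2γ'
  have hγinj : ∀ i ∈ S2, ∀ i' ∈ S2, γf i = γf i' → i = i' := by
    intro i hi i' hi' hee
    have h1 := (hγf i hi).1
    have h2 := (hγf i' hi').1
    rw [hee] at h1
    have h3 : TR i = TR i' := h1.trans h2.symm
    rw [hTR i hi.1, hTR i' hi'.1] at h3
    exact congrArg Subtype.val (Sum.inl.inj (hTinj h3))
  -- bounding function for the diagonal argument
  have hbound : ∀ b, b < θ → ∃ d, d < θ ∧ b < d ∧ ∀ i ∈ S2, γf i < b → i < d := by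
    intro b hb
    set f : b.ToType → Ordinal.{u} := fun t =>
      if h : ∃ i, i ∈ S2 ∧ γf i = ((Ordinal.ToType.mk (o := b)).symm t : Ordinal) then
        h.choose else 0 with hfdef
    have hflt : ∀ t, f t < θ := by
      intro t
      rw [hfdef]
      dsimp only
      split_ifs with h
      · exact hSIio h.choose_spec.1.1
      · exact hθ0
    have hsup : (⨆ t, f t) < θ := by
      apply Ordinal.iSup_lt_ord _ hflt
      rw [Cardinal.mk_toType, hcof]
      exact Cardinal.lt_ord.1 hb
    refine ⟨max (⨆ t, f t) b + 1, ?_, ?_, ?_⟩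
    · rw [Ordinal.add_one_eq_succ]
      exact hθ.succ_lt (max_lt hsup hb)
    · rw [Ordinal.add_one_eq_succ]
      exact (le_max_right _ _).trans_lt (Order.lt_succ _)
    · intro i hi hγb
      have ht : f (Ordinal.ToType.mk (o := b) ⟨γf i, hγb⟩) = i := by
        rw [hfdef]
        dsimp only
        have hex : ∃ i', i' ∈ S2 ∧ γf i' = ((Ordinal.ToType.mk (o := b)).symm
            (Ordinal.ToType.mk (o := b) ⟨γf i, hγb⟩) : Ordinal) := by
          rw [OrderIso.symm_apply_apply]; exact ⟨i, hi, rfl⟩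
        rw [dif_pos hex]
        have hval : (((Ordinal.ToType.mk (o := b)).symm
            (Ordinal.ToType.mk (o := b) ⟨γf i, hγb⟩)) : Ordinal) = γf i := by
          rw [OrderIso.symm_apply_apply]
        exact hγinj _ hex.choose_spec.1 _ hi (hex.choose_spec.2.trans hval)
      have hbdd : BddAbove (Set.range f) := ⟨θ, by rintro y ⟨t, rfl⟩; exact (hflt t).le⟩
      calc i = f _ := ht.symm
        _ ≤ ⨆ t, f t := le_ciSup hbdd _
        _ ≤ max (⨆ t, f t) b := le_max_left _ _
        _ < max (⨆ t, f t) b + 1 := by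
            rw [Ordinal.add_one_eq_succ]; exact Order.lt_succ _
  -- unboundedness of S1
  have hS1unb : ∀ c, c < θ → ∃ a, a ∈ S1 ∧ c < a := by
    intro c hc
    set Δ : Set Ordinal.{u} := {a | a < θ ∧ c < a ∧ ∀ i ∈ S2, γf i < a → i < a} with hΔdef
    have hub : ∀ b, b < θ → ∃ a ∈ Δ, b < a := by
      intro b hb
      obtain ⟨Df, hDf⟩ : ∃ Df : Ordinal.{u} → Ordinal.{u}, ∀ x, x < θ →
          Df x < θ ∧ x < Df x ∧ ∀ i ∈ S2, γf i < x → i < Df x := by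
        have h' : ∀ x, ∃ d, x < θ → (d < θ ∧ x < d ∧ ∀ i ∈ S2, γf i < x → i < d) := by
          intro x
          by_cases hx : x < θ
          · obtain ⟨d, hd⟩ := hbound x hx; exact ⟨d, fun _ => hd⟩
          · exact ⟨0, fun h => absurd h hx⟩
        choose Df hDf using h'
        exact ⟨Df, hDf⟩
      set x : ℕ → Ordinal.{u} := fun n => Nat.rec (max b c + 1) (fun _ p => Df p) n with hxdef
      have hx0 : x 0 = max b c + 1 := rfl
      have hxs : ∀ n, x (n+1) = Df (x n) := fun n => rfl
      have hmbc : max b c < θ := max_lt hb hc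
      have hxθ : ∀ n, x n < θ := by
        intro n
        induction n with
        | zero => rw [hx0, Ordinal.add_one_eq_succ]; exact hθ.succ_lt hmbc
        | succ n ihn => rw [hxs]; exact (hDf _ ihn).1
      have hbddx : BddAbove (Set.range x) := ⟨θ, by rintro y ⟨n, rfl⟩; exact (hxθ n).le⟩
      have haθ : (⨆ n, x n) < θ := by
        apply Ordinal.iSup_lt_ord_lift _ hxθ
        have : Cardinal.lift.{u} #ℕ = ℵ₀ := by simp
        rw [this, hcof]
        exact hunc
      have hxlea : ∀ n, x n ≤ ⨆ n, x n := fun n => le_ciSup hbddx n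
      have hx0lt : max b c < x 0 := by
        rw [hx0, Ordinal.add_one_eq_succ]; exact Order.lt_succ _
      refine ⟨⨆ n, x n, ⟨haθ, ?_, ?_⟩, ?_⟩
      · exact lt_of_le_of_lt (le_max_right b c) (hx0lt.trans_le (hxlea 0))
      · intro i hi hγ
        obtain ⟨n, hn⟩ : ∃ n, γf i < x n := by
          by_contra hcon
          push_neg at hcon
          exact absurd (lt_of_lt_of_le hγ (ciSup_le hcon)) (lt_irrefl _)
        have := (hDf _ (hxθ n)).2.2 i hi hn
        exact lt_of_lt_of_le this ((hxs n) ▸ hxlea (n+1))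
      · exact lt_of_le_of_lt (le_max_left b c) (hx0lt.trans_le (hxlea 0))
    have hclub : IsClubIn Δ θ := by
      refine ⟨fun a ha => ha.1, ?_, ?_⟩
      · intro A hA hAne
        by_cases hsθ : sSup A = θ
        · exact Or.inl hsθ
        right
        have hbdd : BddAbove A := ⟨θ, fun a ha => (hA ha).1.le⟩
        have hsle : sSup A ≤ θ := csSup_le hAne (fun a ha => (hA ha).1.le)
        have hslt : sSup A < θ := lt_of_le_of_ne hsle hsθ
        obtain ⟨a0, ha0⟩ := id hAne
        refine ⟨hslt, lt_of_lt_of_le (hA ha0).2.1 (le_csSup hbdd ha0), ?_⟩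
        intro i hi hγ
        obtain ⟨a, haA, hγa⟩ : ∃ a ∈ A, γf i < a := by
          by_contra hcon
          push_neg at hcon
          exact absurd (csSup_le hAne hcon) (not_le.2 hγ)
        exact lt_of_lt_of_le ((hA haA).2.2 i hi hγa) (le_csSup hbdd haA)
      · apply le_antisymm
        · apply csSup_le
          · obtain ⟨a, ha, _⟩ := hub 0 hθ0
            exact ⟨a, ha⟩
          · exact fun a ha => ha.1.le
        · by_contra hcon
          push_neg at hcon
          obtain ⟨a, haΔ, hlt⟩ := hub (sSup Δ) hcon
          exact absurd (le_csSup ⟨θ, fun y hy => hy.1.le⟩ haΔ) (not_le.2 hlt)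
    obtain ⟨a, haS, haΔ⟩ := hstat.2 Δ hclub
    refine ⟨a, ?_, haΔ.2.1⟩
    by_contra haS1
    have haS2 : a ∈ S2 := ⟨haS, haS1⟩
    exact absurd (haΔ.2.2 a haS2 (hγf a haS2).2) (lt_irrefl a)
  -- κ is at most the size of B
  have hκB : κ ≤ #(B : Set α) := by
    by_contra hcon
    push_neg at hcon
    set fB : ↥B → Ordinal.{u} := fun bb =>
      if h : ∃ i, i ∈ S1 ∧ TR i = Sum.inl bb then h.choose else 0 with hfBdef
    have hfBlt : ∀ bb, fB bb < θ := by
      intro bb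
      rw [hfBdef]
      dsimp only
      split_ifs with h
      · exact hSIio h.choose_spec.1.1
      · exact hθ0
    have hsup : (⨆ bb, fB bb) < θ := Ordinal.iSup_lt_ord (by rw [hcof]; exact hcon) hfBlt
    obtain ⟨a, haS1, halt⟩ := hS1unb (⨆ bb, fB bb) hsup
    obtain ⟨bb, hbb⟩ := haS1.2
    have hfa : fB bb = a := by
      rw [hfBdef]
      dsimp only
      have hex : ∃ i, i ∈ S1 ∧ TR i = Sum.inl bb := ⟨a, haS1, hbb⟩
      rw [dif_pos hex]
      have hsp := hex.choose_spec
      have h3 : TR hex.choose = TR a := hsp.2.trans hbb.symm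
      rw [hTR _ hsp.1.1, hTR _ haS1.1] at h3
      exact congrArg Subtype.val (Sum.inl.inj (hTinj h3))
    have : a ≤ ⨆ bb, fB bb :=
      hfa ▸ le_ciSup (⟨θ, by rintro y ⟨t, rfl⟩; exact (hfBlt t).le⟩ :
        BddAbove (Set.range fB)) bb
    exact absurd halt (not_lt.2 this)
  -- U is at most the size of B plus κ
  have hUle : #(U : Set β) ≤ #(B : Set α) + κ := by
    have hgex : ∀ u : ↥U, ∃ r : ↥B ⊕ θ.ToType,
        (∀ bb, r = Sum.inl bb → chase (u : β) = Sum.inl bb) ∧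
        (∀ t, r = Sum.inr t → chase (u : β) =
          Sum.inr ((Ordinal.ToType.mk (o := θ)).symm t : Ordinal)) := by
      intro u
      rcases hc : chase (u : β) with bb | γ
      · refine ⟨Sum.inl bb, ?_, ?_⟩
        · intro b' hb'
          rw [← Sum.inl.inj hb']
        · intro t ht
          exact absurd ht (by simp)
      · have hγθ : γ < θ := (Linr _ _ rfl (hValidU _ u.2) γ hc).2.1
        refine ⟨Sum.inr (Ordinal.ToType.mk (o := θ) ⟨γ, hγθ⟩), ?_, ?_⟩
        · intro b' hb'
          exact absurd hb' (by simp)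
        · intro t ht
          have hte : ((Ordinal.ToType.mk (o := θ)).symm t : Ordinal) = γ := by
            rw [← Sum.inr.inj ht, OrderIso.symm_apply_apply]
          rw [hte]
    choose gU hgU1 hgU2 using hgex
    have hginj : Function.Injective gU := by
      intro u u' hee
      have hchase : chase (u : β) = chase (u' : β) := by
        rcases hr : gU u with bb | t
        · rw [hgU1 u bb hr, hgU1 u' bb (hee ▸ hr)]
        · rw [hgU2 u t hr, hgU2 u' t (hee ▸ hr)]
      obtain ⟨v, r1, r2⟩ := Lmeet _ _ _ rfl (hValidU _ u.2) (hValidU _ u'.2) hchase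
      exact Subtype.ext (hmerge _ _ v (hnopredU _ u.2) (hnopredU _ u'.2) r1 r2)
    calc #(U : Set β) ≤ #(↥B ⊕ θ.ToType) := Cardinal.mk_le_of_injective hginj
      _ = #(B : Set α) + κ := by
          rw [← Cardinal.add_def, Cardinal.mk_toType, hθdef, Cardinal.card_ord]
  -- conclusion
  have hBinf : ℵ₀ ≤ #(B : Set α) := hunc.le.trans hκB
  have hUB : #(U : Set β) ≤ #(B : Set α) := by
    calc #(U : Set β) ≤ #(B : Set α) + κ := hUle
      _ ≤ #(B : Set α) + #(B : Set α) := add_le_add_right hκB _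
      _ = #(B : Set α) := Cardinal.add_eq_self hBinf
  calc κ + #(U : Set β) ≤ #(B : Set α) + #(B : Set α) := add_le_add hκB hUB
    _ = #(B : Set α) := Cardinal.add_eq_self hBinf

/-! ### Assembly -/

theorem obstruction_one_le {α β : Type u} {κ : Cardinal.{u}} {Φ Λ : Society α β}
    (h : IsObstruction κ Φ Λ) : 1 ≤ κ := by
  cases h with
  | small h1 h2 hsat hA => exact h1
  | large T S hreg hunc htower μ hμ hS hoff hstat hunion =>
    exact (Cardinal.one_lt_aleph0.trans hunc).le

theorem isClubIn_Iio {θ : Ordinal.{u}} (hθ : Order.IsSuccLimit θ) : IsClubIn (Set.Iio θ) θ := by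
  refine ⟨subset_rfl, ?_, ?_⟩
  · intro A hA hAne
    by_cases hs : sSup A = θ
    · exact Or.inl hs
    · exact Or.inr (lt_of_le_of_ne (csSup_le hAne (fun a ha => (hA ha).le)) hs)
  · apply le_antisymm
    · exact csSup_le ⟨0, hθ.pos⟩ (fun a ha => ha.le)
    · by_contra hcon
      push_neg at hcon
      have h2 : sSup (Set.Iio θ) + 1 < θ := by
        rw [Ordinal.add_one_eq_succ]; exact hθ.succ_lt hcon
      have := le_csSup (⟨θ, fun a (ha : a ∈ Set.Iio θ) => ha.le⟩ :
        BddAbove (Set.Iio θ)) h2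
      rw [Ordinal.add_one_eq_succ] at this
      exact absurd this (not_le.2 (Order.lt_succ _))

theorem obstruction_nonempty {α β : Type u} {κ : Cardinal.{u}} {Φ Λ : Society α β}
    (h : IsObstruction κ Φ Λ) : Nonempty β := by
  induction h with
  | small h1 h2 hsat hA =>
    obtain ⟨A, hAsub, hAcard, hcrit⟩ := hA
    obtain ⟨E, hE⟩ := hcrit.1
    have hne : (A : Set _).Nonempty := by
      have h0 : #(A : Set _) ≠ 0 := by
        rw [hAcard]; exact (lt_of_lt_of_le zero_lt_one h1).ne'
      rw [Cardinal.mk_ne_zero_iff] at h0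
      exact Set.nonempty_coe_sort.1 h0
    obtain ⟨a, _⟩ := hne
    exact ⟨E a⟩
  | large T S hreg hunc htower μ hμ hS hoff hstat hunion ih =>
    obtain ⟨i, hiS, _⟩ := hstat.2 _ (isClubIn_Iio (Cardinal.isSuccLimit_ord hunc.le))
    exact ih i hiS

theorem obstruction_master {α β : Type u} {κ : Cardinal.{u}} {Φ Λ : Society α β}
    (h : IsObstruction κ Φ Λ) :
    (∃ B ⊆ Φ.M, #(B : Set α) ≤ κ ∧ (Φ.erase B).HasEspousal) ∧
    (∀ B, B ⊆ Φ.M → ∀ E : α → β, (Φ.erase B).Espousal E →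
      κ + #((Φ.W \ E '' (Φ.M \ B)) : Set β) ≤ #(B : Set α)) := by
  induction h with
  | small h1 h2 hsat hA =>
    obtain ⟨A, hAsub, hAcard, hcrit⟩ := hA
    constructor
    · exact ⟨A, hAsub, hAcard.le, hcrit.1⟩
    · intro B hB E hE
      rw [← hAcard]
      exact surplus_small hAsub hcrit hB hE
  | large T S hreg hunc htower μ hμ hS hoff hstat hunion ih =>
    subst hunion
    haveI hne : Nonempty β := by
      obtain ⟨i, hiS, _⟩ := hstat.2 _
        (isClubIn_Iio (Cardinal.isSuccLimit_ord hunc.le))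
      exact obstruction_nonempty (hS i hiS)
    have hμ1 : ∀ i ∈ S, 1 ≤ μ i := fun i hi => obstruction_one_le (hS i hi)
    constructor
    · exact large_P1 hreg hunc htower μ hμ hoff hstat (fun i hi => (ih i hi).1)
    · intro B hB E hE
      exact large_P2 hreg hunc htower μ hμ1 hoff hstat (fun i hi => (ih i hi).2) hB hE

end ObstructionProof



/-- If `Φ` is a `κ`-obstruction in a society `Λ`, then `δ(Φ) = κ`. -/
theorem delta_of_obstruction {α β : Type u} (Λ Φ : Society α β) (κ : Cardinal.{u})
    (h : IsObstruction κ Φ Λ) : Φ.delta = κ := by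
  have hm := obstruction_master h
  apply le_antisymm
  · obtain ⟨B, hB, hle, hesp⟩ := hm.1
    exact le_trans (csInf_le' ⟨B, hB, rfl, hesp⟩) hle
  · apply le_csInf
    · obtain ⟨B, hB, hle, hesp⟩ := hm.1
      exact ⟨#(B : Set α), B, hB, rfl, hesp⟩
    · rintro c ⟨B, hB, rfl, E, hE⟩
      exact (self_le_add_right κ _).trans (hm.2 B hB E hE)
end

section
/- Every finite geometric lattice of rank at least 2 has a matching. -/
universe u

/-- An element of a poset is an *atom* (point) if it is an upper cover of a least element. -/
def IsAtomP {P : Type*} [PartialOrder P] (a : P) : Prop :=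
  ∃ z : P, (∀ w, z ≤ w) ∧ z ⋖ a

/-- An element of a poset is a *coatom* (hyperplane) if it is a lower cover of a greatest
element. -/
def IsCoatomP {P : Type*} [PartialOrder P] (a : P) : Prop :=
  ∃ z : P, (∀ w, w ≤ z) ∧ a ⋖ z

/-- A partial order is a *geometric lattice of finite height* if it is a lattice
(binary joins and meets exist), has no infinite chains, is semimodular, and every
element is a join (least upper bound) of a set of atoms. -/
def IsGeomLatFH (P : Type*) [PartialOrder P] : Prop :=
  (∀ x y : P, ∃ z, IsLUB {x, y} z) ∧
  (∀ x y : P, ∃ z, IsGLB {x, y} z) ∧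
  (∀ c : Set P, IsChain (· ≤ ·) c → c.Finite) ∧
  (∀ a b c : P, a ⋖ b → a ⋖ c → b ≠ c → ∃ d, b ⋖ d ∧ c ⋖ d) ∧
  (∀ x : P, ∃ S : Set P, (∀ a ∈ S, IsAtomP a) ∧ IsLUB S x)

/-- `r` is the rank (height) function of a graded bounded poset: `r ⊥ = 0` and `r`
increases by exactly one across covering pairs. -/
def IsRankFn {L : Type*} [PartialOrder L] [OrderBot L] (r : L → ℕ) : Prop :=
  r ⊥ = 0 ∧ ∀ x y : L, x ⋖ y → r y = r x + 1

/-- A *matching* of a lattice: an injection from atoms to coatoms (hyperplanes) such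
that each atom lies below its image. -/
def HasMatching (L : Type*) [CompleteLattice L] : Prop :=
  ∃ f : {a : L // IsAtom a} → {h : L // IsCoatom h},
    Function.Injective f ∧ ∀ a : {a : L // IsAtom a}, (a : L) ≤ ((f a : {h : L // IsCoatom h}) : L)

set_option linter.unusedSectionVars false

attribute [local instance] Classical.propDecidable

section GeomProof

open Finset

variable {L : Type u} [CompleteLattice L] [Fintype L]

/-- filter over the whole (finite) lattice, with a fixed decidability instance. -/
private noncomputable def fil (p : L → Prop) : Finset L :=
  @Finset.filter L p (fun a => Classical.propDecidable _) univ

private lemma mem_fil {p : L → Prop} {x : L} : x ∈ fil p ↔ p x := by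
  simp [fil]

private lemma card_filter_lt_mono {z y : L} (h : z < y) :
    (fil fun w : L => w < z).card < (fil fun w : L => w < y).card := by
  have h1 : (fil fun w : L => w < z) ⊆ (fil fun w : L => w < y) := by
    intro w hw
    rw [mem_fil] at hw ⊢
    exact hw.trans h
  apply Finset.card_lt_card
  rw [Finset.ssubset_iff_of_subset h1]
  exact ⟨z, by rw [mem_fil]; exact h, by rw [mem_fil]; exact lt_irrefl z⟩

private lemma card_filter_gt_mono {x z : L} (h : x < z) :
    (fil fun w : L => z < w).card < (fil fun w : L => x < w).card := by
  have h1 : (fil fun w : L => z < w) ⊆ (fil fun w : L => x < w) := by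
    intro w hw
    rw [mem_fil] at hw ⊢
    exact h.trans hw
  apply Finset.card_lt_card
  rw [Finset.ssubset_iff_of_subset h1]
  exact ⟨z, by rw [mem_fil]; exact h, by rw [mem_fil]; exact lt_irrefl z⟩

/-- The Möbius function of the finite lattice `L`. -/
private noncomputable def mu (x : L) (y : L) : ℚ :=
  if x = y then 1
  else if x < y then
    - ∑ z ∈ (fil (fun z : L => x ≤ z ∧ z < y)).attach, mu x z.val
  else 0
termination_by (fil fun w : L => w < y).card
decreasing_by
  have hz : x ≤ z.val ∧ z.val < y := (mem_fil (p := fun z : L => x ≤ z ∧ z < y)).1 z.2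
  exact card_filter_lt_mono hz.2

private lemma mu_self (x : L) : mu x x = 1 := by rw [mu]; simp

private lemma mu_of_lt {x y : L} (h : x < y) :
    mu x y = - ∑ z ∈ fil (fun z : L => x ≤ z ∧ z < y), mu x z := by
  rw [mu, if_neg h.ne, if_pos h, Finset.sum_attach]

/-- lower-sum identity: `∑_{z ∈ [x,y]} μ(x,z) = [x = y]`. -/
private lemma sum_mu_left (x y : L) :
    ∑ z ∈ fil (fun z : L => x ≤ z ∧ z ≤ y), mu x z = if x = y then 1 else 0 := by
  by_cases hxy : x ≤ y
  · rcases eq_or_lt_of_le hxy with rfl | hlt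
    · have : fil (fun z : L => x ≤ z ∧ z ≤ x) = {x} := by
        ext z; rw [mem_fil]; simp [le_antisymm_iff, and_comm, eq_comm]
      rw [this, if_pos rfl, Finset.sum_singleton, mu_self]
    · have hset : fil (fun z : L => x ≤ z ∧ z ≤ y)
          = insert y (fil (fun z : L => x ≤ z ∧ z < y)) := by
        ext z
        rw [mem_insert, mem_fil, mem_fil]
        constructor
        · rintro ⟨h1, h2⟩
          rcases eq_or_lt_of_le h2 with rfl | h2'
          · exact Or.inl rfl
          · exact Or.inr ⟨h1, h2'⟩
        · rintro (rfl | ⟨h1, h2⟩)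
          · exact ⟨hxy, le_rfl⟩
          · exact ⟨h1, h2.le⟩
      have hnot : y ∉ fil (fun z : L => x ≤ z ∧ z < y) := by
        rw [mem_fil]; rintro ⟨-, h2⟩; exact lt_irrefl y h2
      rw [hset, Finset.sum_insert hnot, mu_of_lt hlt, if_neg hlt.ne]
      ring
  · rw [if_neg (by rintro rfl; exact hxy le_rfl)]
    apply Finset.sum_eq_zero
    intro z hz
    rw [mem_fil] at hz
    exact absurd (hz.1.trans hz.2) hxy

private lemma sum_filter_comm (p : L → Prop) (c : L → L → Prop) (q : L → Prop)
    (d : L → L → Prop) (f : L → L → ℚ)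
    (h : ∀ z w, (p z ∧ c z w) ↔ (q w ∧ d z w)) :
    (∑ z ∈ fil p, ∑ w ∈ fil (fun w => c z w), f z w)
      = ∑ w ∈ fil q, ∑ z ∈ fil (fun z => d z w), f z w := by
  have key : ∀ (P : L → Prop) (C : L → L → Prop) (F : L → L → ℚ),
      (∑ z ∈ fil P, ∑ w ∈ fil (fun w => C z w), F z w)
        = ∑ z : L, ∑ w : L, if P z ∧ C z w then F z w else 0 := by
    intro P C F
    rw [fil, Finset.sum_filter]
    refine Finset.sum_congr rfl fun z _ => ?_
    by_cases hz : P z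
    · rw [if_pos hz, fil, Finset.sum_filter]
      exact Finset.sum_congr rfl fun w _ => by simp [hz]
    · simp [hz]
  rw [key p c f, key q (fun w z => d z w) (fun w z => f z w), Finset.sum_comm]
  exact Finset.sum_congr rfl fun w _ => Finset.sum_congr rfl fun z _ => if_congr (h z w) rfl rfl

/-- upper-sum identity: `∑_{z ∈ [u,y]} μ(z,y) = [u = y]`. -/
private lemma sum_mu_right (y : L) : ∀ u : L,
    (∑ z ∈ fil (fun z : L => u ≤ z ∧ z ≤ y), mu z y) = if u = y then 1 else 0 := by
  intro u
  by_cases huy : u ≤ y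
  · rcases eq_or_lt_of_le huy with rfl | hlt
    · have : fil (fun z : L => u ≤ z ∧ z ≤ u) = {u} := by
        ext z; rw [mem_fil]; simp [le_antisymm_iff, and_comm, eq_comm]
      rw [this, if_pos rfl, Finset.sum_singleton, mu_self]
    · rw [if_neg hlt.ne]
      have step : ∀ z, u ≤ z → z ≤ y →
          mu z y = (if z = y then (1:ℚ) else 0)
            - ∑ w ∈ fil (fun w : L => z ≤ w ∧ w < y), mu z w := by
        intro z _ hzy
        rcases eq_or_lt_of_le hzy with rfl | hzy'
        · have : fil (fun w : L => z ≤ w ∧ w < z) = ∅ := by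
            ext w; rw [mem_fil]; simp only [notMem_empty, iff_false]
            rintro ⟨h1, h2⟩; exact absurd (h1.trans_lt h2) (lt_irrefl z)
          rw [this, if_pos rfl, mu_self, Finset.sum_empty, sub_zero]
        · rw [mu_of_lt hzy', if_neg hzy'.ne]; ring
      have main : (∑ z ∈ fil (fun z : L => u ≤ z ∧ z ≤ y), mu z y)
          = (∑ z ∈ fil (fun z : L => u ≤ z ∧ z ≤ y), if z = y then (1:ℚ) else 0)
            - ∑ z ∈ fil (fun z : L => u ≤ z ∧ z ≤ y),
                ∑ w ∈ fil (fun w : L => z ≤ w ∧ w < y), mu z w := by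
        rw [← Finset.sum_sub_distrib]
        refine Finset.sum_congr rfl fun z hz => ?_
        rw [mem_fil] at hz
        exact step z hz.1 hz.2
      have first : (∑ z ∈ fil (fun z : L => u ≤ z ∧ z ≤ y),
          if z = y then (1:ℚ) else 0) = 1 := by
        rw [Finset.sum_eq_single y]
        · simp
        · intro b _ hb; rw [if_neg hb]
        · intro hy; exact absurd (mem_fil.2 ⟨huy, le_rfl⟩) hy
      have swap : (∑ z ∈ fil (fun z : L => u ≤ z ∧ z ≤ y),
            ∑ w ∈ fil (fun w : L => z ≤ w ∧ w < y), mu z w)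
          = ∑ w ∈ fil (fun w : L => u ≤ w ∧ w < y),
              ∑ z ∈ fil (fun z : L => u ≤ z ∧ z ≤ w), mu z w := by
        apply sum_filter_comm
        intro z w
        constructor
        · rintro ⟨⟨h1, _⟩, h3, h4⟩
          exact ⟨⟨h1.trans h3, h4⟩, h1, h3⟩
        · rintro ⟨⟨h1, h2⟩, h3, h4⟩
          exact ⟨⟨h3, h4.trans h2.le⟩, h4, h2⟩
      have second : (∑ w ∈ fil (fun w : L => u ≤ w ∧ w < y),
            ∑ z ∈ fil (fun z : L => u ≤ z ∧ z ≤ w), mu z w) = 1 := by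
        have hcong : ∀ w ∈ fil (fun w : L => u ≤ w ∧ w < y),
            (∑ z ∈ fil (fun z : L => u ≤ z ∧ z ≤ w), mu z w)
              = if w = u then (1:ℚ) else 0 := by
          intro w hw
          have hw' : u ≤ w ∧ w < y := (mem_fil (p := fun w : L => u ≤ w ∧ w < y)).1 hw
          have := sum_mu_right w u
          rw [this]
          by_cases h : u = w
          · rw [if_pos h, if_pos h.symm]
          · rw [if_neg h, if_neg (Ne.symm h)]
        rw [Finset.sum_congr rfl hcong, Finset.sum_eq_single u]
        · simp
        · intro b _ hb; rw [if_neg hb]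
        · intro hu; exact absurd (mem_fil.2 ⟨le_rfl, hlt⟩) hu
      rw [main, first, swap, second]; ring
  · rw [if_neg (by rintro rfl; exact huy le_rfl)]
    apply Finset.sum_eq_zero
    intro z hz
    rw [mem_fil] at hz
    exact absurd (hz.1.trans hz.2) huy
termination_by (fil fun w : L => w < y).card
decreasing_by
  exact card_filter_lt_mono hw'.2

/-- Weisner's theorem. -/
private lemma weisner {x a y : L} (hxa : x < a) (hay : a ≤ y) :
    ∑ w ∈ fil (fun w : L => x ≤ w ∧ w ≤ y ∧ w ⊔ a = y), mu x w = 0 := by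
  have e2 : ∀ w ∈ fil (fun w : L => x ≤ w ∧ w ≤ y),
      (if w ⊔ a = y then mu x w else 0)
        = ∑ z ∈ fil (fun z : L => (w ≤ z ∧ a ≤ z) ∧ z ≤ y), mu x w * mu z y := by
    intro w hw
    have hw' : x ≤ w ∧ w ≤ y := (mem_fil (p := fun w : L => x ≤ w ∧ w ≤ y)).1 hw
    have hfil : (fil (fun z : L => (w ≤ z ∧ a ≤ z) ∧ z ≤ y))
        = fil (fun z : L => w ⊔ a ≤ z ∧ z ≤ y) := by
      ext z; rw [mem_fil, mem_fil, sup_le_iff]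
    rw [hfil, ← Finset.mul_sum, sum_mu_right y (w ⊔ a)]
    by_cases hwy : w ⊔ a = y <;> simp [hwy]
  have e1 : (∑ w ∈ fil (fun w : L => x ≤ w ∧ w ≤ y ∧ w ⊔ a = y), mu x w)
      = ∑ w ∈ fil (fun w : L => x ≤ w ∧ w ≤ y), if w ⊔ a = y then mu x w else 0 := by
    rw [fil, Finset.sum_filter, fil, Finset.sum_filter]
    refine Finset.sum_congr rfl fun w _ => ?_
    by_cases h1 : x ≤ w ∧ w ≤ y
    · by_cases h2 : w ⊔ a = y <;> simp [h1, h2]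
    · have : ¬(x ≤ w ∧ w ≤ y ∧ w ⊔ a = y) := by tauto
      simp [h1, this]
  rw [e1, Finset.sum_congr rfl e2]
  have swap : (∑ w ∈ fil (fun w : L => x ≤ w ∧ w ≤ y),
        ∑ z ∈ fil (fun z : L => (w ≤ z ∧ a ≤ z) ∧ z ≤ y), mu x w * mu z y)
      = ∑ z ∈ fil (fun z : L => a ≤ z ∧ z ≤ y),
          ∑ w ∈ fil (fun w : L => x ≤ w ∧ w ≤ z), mu x w * mu z y := by
    apply sum_filter_comm
    intro w z
    constructor
    · rintro ⟨⟨h1, h2⟩, ⟨h3, h4⟩, h5⟩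
      exact ⟨⟨h4, h5⟩, h1, h3⟩
    · rintro ⟨⟨h1, h2⟩, h3, h4⟩
      exact ⟨⟨h3, h4.trans h2⟩, ⟨h4, h1⟩, h2⟩
  rw [swap]
  apply Finset.sum_eq_zero
  intro z hz
  have hz' : a ≤ z ∧ z ≤ y := (mem_fil (p := fun z : L => a ≤ z ∧ z ≤ y)).1 hz
  rw [← Finset.sum_mul, sum_mu_left x z]
  have : x ≠ z := by rintro rfl; exact absurd hz'.1 (not_le_of_gt hxa)
  simp [this]

section OrderLemmas

variable {hsm : ∀ a b c : L, a ⋖ b → a ⋖ c → b ≠ c → ∃ d, b ⋖ d ∧ c ⋖ d}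

private lemma isAtom_of_isAtomP {a : L} (h : IsAtomP a) : IsAtom a := by
  obtain ⟨z, hz, hza⟩ := h
  have : z = ⊥ := le_antisymm (hz ⊥) bot_le
  rw [this] at hza
  exact bot_covBy_iff.1 hza

private lemma atomistic_le (hatom : ∀ x : L, ∃ S : Set L, (∀ a ∈ S, IsAtomP a) ∧ IsLUB S x)
    {y w : L} (h : ∀ q : L, IsAtom q → q ≤ y → q ≤ w) : y ≤ w := by
  obtain ⟨S, hS, hlub⟩ := hatom y
  refine hlub.2 fun s hs => ?_
  exact h s (isAtom_of_isAtomP (hS s hs)) (hlub.1 hs)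

private lemma exists_atom_not_le
    (hatom : ∀ x : L, ∃ S : Set L, (∀ a ∈ S, IsAtomP a) ∧ IsLUB S x)
    {w y : L} (h : w < y) : ∃ q : L, IsAtom q ∧ q ≤ y ∧ ¬ q ≤ w := by
  by_contra hc
  push_neg at hc
  exact absurd (atomistic_le hatom fun q hq hqy => hc q hq hqy) (not_le_of_gt h)

/-- atom exchange: if `p` is an atom not below `h`, then `h ⋖ h ⊔ p`. -/
private lemma exchange (hsm : ∀ a b c : L, a ⋖ b → a ⋖ c → b ≠ c → ∃ d, b ⋖ d ∧ c ⋖ d) :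
    ∀ h p : L, IsAtom p → ¬ p ≤ h → h ⋖ h ⊔ p := by
  intro h p hp hph
  by_cases hbot : h = ⊥
  · subst hbot
    rw [bot_sup_eq]
    exact hp.bot_covBy
  · -- pick a maximal element below h
    have hne : (fil fun w : L => w < h).Nonempty :=
      ⟨⊥, mem_fil.2 (bot_lt_iff_ne_bot.2 hbot)⟩
    obtain ⟨z, hzmem, hzmax⟩ : ∃ z ∈ fil (fun w : L => w < h), ∀ x ∈ fil (fun w : L => w < h), ¬ z < x := by
      obtain ⟨z', hz'⟩ := Finset.exists_maximal hne
      exact ⟨z', hz'.1, fun x hx hlt => lt_irrefl _ (hlt.trans_le (hz'.2 hx hlt.le))⟩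
    have hzh : z < h := (mem_fil (p := fun w : L => w < h)).1 hzmem
    have hzcov : z ⋖ h := by
      refine ⟨hzh, fun c hzc hch => ?_⟩
      exact hzmax c (mem_fil.2 hch) hzc
    have hpz : ¬ p ≤ z := fun hle => hph (hle.trans hzh.le)
    have ih : z ⋖ z ⊔ p := exchange hsm z p hp hpz
    have hne2 : h ≠ z ⊔ p := by
      rintro rfl
      exact hph le_sup_right
    obtain ⟨d, hd1, hd2⟩ := hsm z h (z ⊔ p) hzcov ih hne2
    have hdle : h ⊔ p ≤ d := sup_le hd1.le (le_sup_right.trans hd2.le)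
    have hlt : h < h ⊔ p := lt_of_le_of_ne le_sup_left (fun he => hph (he ▸ le_sup_right))
    have : h ⊔ p = d := by
      by_contra hne3
      exact hd1.2 hlt (lt_of_le_of_ne hdle hne3)
    rw [this]
    exact hd1
termination_by h => (fil fun w : L => w < h).card
decreasing_by
  exact card_filter_lt_mono hzh

/-- relative complement construction: if the atom `p` is below `y` but not below `x ≤ y`,
then there is `w` with `x ≤ w < y` and `w ⊔ p = y`. -/
private lemma exists_sup_eq
    (hsm : ∀ a b c : L, a ⋖ b → a ⋖ c → b ≠ c → ∃ d, b ⋖ d ∧ c ⋖ d)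
    (hatom : ∀ x : L, ∃ S : Set L, (∀ a ∈ S, IsAtomP a) ∧ IsLUB S x)
    {x y p : L} (hp : IsAtom p) (hpy : p ≤ y) (hpx : ¬ p ≤ x) (hxy : x ≤ y) :
    ∃ w : L, x ≤ w ∧ w < y ∧ w ⊔ p = y := by
  have hne : (fil fun w : L => x ≤ w ∧ w ≤ y ∧ ¬ p ≤ w).Nonempty :=
    ⟨x, mem_fil.2 ⟨le_rfl, hxy, hpx⟩⟩
  obtain ⟨w, hwmem, hwmax⟩ : ∃ w ∈ fil (fun w : L => x ≤ w ∧ w ≤ y ∧ ¬ p ≤ w), ∀ x' ∈ fil (fun w : L => x ≤ w ∧ w ≤ y ∧ ¬ p ≤ w), ¬ w < x' := by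
    obtain ⟨z', hz'⟩ := Finset.exists_maximal hne
    exact ⟨z', hz'.1, fun x hx hlt => lt_irrefl _ (hlt.trans_le (hz'.2 hx hlt.le))⟩
  have hw : x ≤ w ∧ w ≤ y ∧ ¬ p ≤ w :=
    (mem_fil (p := fun w : L => x ≤ w ∧ w ≤ y ∧ ¬ p ≤ w)).1 hwmem
  have hwp : w < w ⊔ p := lt_of_le_of_ne le_sup_left (fun he => hw.2.2 (he ▸ le_sup_right))
  have key : ∀ q : L, IsAtom q → q ≤ y → q ≤ w ⊔ p := by
    intro q hq hqy
    by_cases hqw : q ≤ w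
    · exact hqw.trans le_sup_left
    · have hwq : w < w ⊔ q := lt_of_le_of_ne le_sup_left (fun he => hqw (he ▸ le_sup_right))
      have hmem2 : w ⊔ q ∉ fil (fun w : L => x ≤ w ∧ w ≤ y ∧ ¬ p ≤ w) := by
        intro hmem
        exact hwmax _ hmem hwq
      have hpwq : p ≤ w ⊔ q := by
        by_contra hc
        exact hmem2 (mem_fil.2 ⟨hw.1.trans le_sup_left, sup_le hw.2.1 hqy, hc⟩)
      have hcovq : w ⋖ w ⊔ q := exchange hsm w q hq hqw
      have hle : w ⊔ p ≤ w ⊔ q := sup_le le_sup_left hpwq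
      have : w ⊔ p = w ⊔ q := by
        by_contra hne2
        exact hcovq.2 hwp (lt_of_le_of_ne hle hne2)
      exact le_sup_right.trans this.ge
  have hyle : y ≤ w ⊔ p := atomistic_le hatom key
  have hsup : w ⊔ p = y := le_antisymm (sup_le hw.2.1 hpy) hyle
  exact ⟨w, hw.1, lt_of_le_of_ne hw.2.1 (fun he => hw.2.2 (he ▸ hpy)), hsup⟩

end OrderLemmas

section RankLemmas

/-- rank is strictly monotone. -/
private lemma rank_lt (r : L → ℕ) (hrc : ∀ x y : L, x ⋖ y → r y = r x + 1) :
    ∀ x y : L, x < y → r x < r y := by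
  intro x y hxy
  have hne : (fil fun z : L => x < z ∧ z ≤ y).Nonempty := ⟨y, mem_fil.2 ⟨hxy, le_rfl⟩⟩
  obtain ⟨z, hzmem, hzmin⟩ : ∃ z ∈ fil (fun z : L => x < z ∧ z ≤ y), ∀ x' ∈ fil (fun z : L => x < z ∧ z ≤ y), ¬ x' < z := by
    obtain ⟨z', hz'⟩ := Finset.exists_minimal hne
    exact ⟨z', hz'.1, fun x hx hlt => lt_irrefl _ (hlt.trans_le (hz'.2 hx hlt.le))⟩
  have hz : x < z ∧ z ≤ y := (mem_fil (p := fun z : L => x < z ∧ z ≤ y)).1 hzmem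
  have hcov : x ⋖ z := by
    refine ⟨hz.1, fun c hxc hcz => ?_⟩
    exact hzmin c (mem_fil.2 ⟨hxc, hcz.le.trans hz.2⟩) hcz
  have hrz : r z = r x + 1 := hrc x z hcov
  rcases eq_or_lt_of_le hz.2 with rfl | hlt
  · omega
  · have := rank_lt r hrc z y hlt
    omega
termination_by x => (fil fun w : L => x < w).card
decreasing_by
  exact card_filter_gt_mono hz.1

/-- Rota's sign theorem. -/
private lemma mu_sign
    (hsm : ∀ a b c : L, a ⋖ b → a ⋖ c → b ≠ c → ∃ d, b ⋖ d ∧ c ⋖ d)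
    (hatom : ∀ x : L, ∃ S : Set L, (∀ a ∈ S, IsAtomP a) ∧ IsLUB S x)
    (r : L → ℕ) (hrc : ∀ x y : L, x ⋖ y → r y = r x + 1) :
    ∀ y x : L, x ≤ y → 0 < (-1 : ℚ) ^ (r x + r y) * mu x y := by
  intro y x hxy
  rcases eq_or_lt_of_le hxy with rfl | hlt
  · rw [mu_self, mul_one, pow_add]
    simpa using mul_self_pos.mpr (pow_ne_zero (r x) (by norm_num : (-1:ℚ) ≠ 0))
  · obtain ⟨p, hp, hpy, hpx⟩ := exists_atom_not_le hatom hlt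
    have hcovxa : x ⋖ x ⊔ p := exchange hsm x p hp hpx
    have hxa : x < x ⊔ p := hcovxa.1
    have hay : x ⊔ p ≤ y := sup_le hxy hpy
    have hweis := weisner (x := x) (a := x ⊔ p) (y := y) hxa hay
    set s := fil (fun w : L => x ≤ w ∧ w ≤ y ∧ w ⊔ (x ⊔ p) = y) with hs
    have hymem : y ∈ s := mem_fil.2 ⟨hxy, le_rfl, sup_eq_left.2 hay⟩
    have hsplit : mu x y + ∑ w ∈ s.erase y, mu x w = 0 := by
      rw [Finset.add_sum_erase _ _ hymem]; exact hweis
    have hmux : mu x y = - ∑ w ∈ s.erase y, mu x w :=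
      eq_neg_of_add_eq_zero_left hsplit
    -- facts about elements of `s.erase y`
    have hfacts : ∀ w ∈ s.erase y, x ≤ w ∧ w < y ∧ r y = r w + 1 := by
      intro w hw
      obtain ⟨hwne, hwmem⟩ := Finset.mem_erase.1 hw
      have hw' : x ≤ w ∧ w ≤ y ∧ w ⊔ (x ⊔ p) = y :=
        (mem_fil (p := fun w : L => x ≤ w ∧ w ≤ y ∧ w ⊔ (x ⊔ p) = y)).1 hwmem
      have hwlt : w < y := lt_of_le_of_ne hw'.2.1 hwne
      have hwp : w ⊔ p = y := by
        have : w ⊔ (x ⊔ p) = (w ⊔ x) ⊔ p := by rw [sup_assoc]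
        rw [this, sup_eq_left.2 hw'.1] at hw'
        exact hw'.2.2
      have hpw : ¬ p ≤ w := by
        intro hc
        rw [sup_eq_left.2 hc] at hwp
        exact hwne hwp
      have hcov : w ⋖ y := hwp ▸ exchange hsm w p hp hpw
      exact ⟨hw'.1, hwlt, hrc w y hcov⟩
    have htrans : (-1 : ℚ) ^ (r x + r y) * mu x y
        = ∑ w ∈ s.erase y, (-1 : ℚ) ^ (r x + r w) * mu x w := by
      rw [hmux, mul_neg, Finset.mul_sum, ← Finset.sum_neg_distrib]
      refine Finset.sum_congr rfl fun w hw => ?_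
      have hry : r y = r w + 1 := (hfacts w hw).2.2
      rw [hry, ← add_assoc, pow_succ]
      ring
    rw [htrans]
    apply Finset.sum_pos
    · intro w hw
      have hf := hfacts w hw
      exact mu_sign hsm hatom r hrc w x hf.1
    · obtain ⟨w₀, hw1, hw2, hw3⟩ := exists_sup_eq hsm hatom hp hpy hpx hxy
      refine ⟨w₀, Finset.mem_erase.2 ⟨hw2.ne, mem_fil.2 ⟨hw1, hw2.le, ?_⟩⟩⟩
      have heq : w₀ ⊔ (x ⊔ p) = (w₀ ⊔ x) ⊔ p := (sup_assoc w₀ x p).symm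
      rw [heq, sup_eq_left.2 hw1, hw3]
termination_by y => (fil fun w : L => w < y).card
decreasing_by
  exact card_filter_lt_mono hf.2.1

end RankLemmas

section Core

private lemma fil_filter (p q : L → Prop) :
    (fil p).filter q = fil (fun h => p h ∧ q h) := by
  ext z
  rw [Finset.mem_filter, mem_fil, mem_fil]

private lemma fil_split (p q : L → Prop) (f : L → ℚ) :
    (∑ h ∈ fil (fun h => p h ∧ q h), f h) + ∑ h ∈ fil (fun h => p h ∧ ¬ q h), f h
      = ∑ h ∈ fil p, f h := by
  rw [fil, fil, fil, Finset.sum_filter, Finset.sum_filter, Finset.sum_filter,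
    ← Finset.sum_add_distrib]
  refine Finset.sum_congr rfl fun h _ => ?_
  by_cases hp : p h <;> by_cases hq : q h <;> simp [hp, hq]

private lemma atom_le_atom {a b : L} (ha : IsAtom a) (hb : IsAtom b) (h : a ≤ b) : a = b := by
  rcases eq_or_lt_of_le h with rfl | hlt
  · rfl
  · exact absurd (hb.2 a hlt) ha.1

private lemma weisner_coatoms
    (hsm : ∀ a b c : L, a ⋖ b → a ⋖ c → b ≠ c → ∃ d, b ⋖ d ∧ c ⋖ d)
    {b q : L} (hq : IsAtom q) (hqb : ¬ q ≤ b) :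
    mu b ⊤ + ∑ h ∈ fil (fun h : L => IsCoatom h ∧ b ≤ h ∧ ¬ q ≤ h), mu b h = 0 := by
  have hlt : b < b ⊔ q := (exchange hsm b q hq hqb).1
  have hw := weisner (x := b) (a := b ⊔ q) (y := (⊤ : L)) hlt le_top
  have hset : fil (fun w : L => b ≤ w ∧ w ≤ ⊤ ∧ w ⊔ (b ⊔ q) = ⊤)
      = insert ⊤ (fil (fun h : L => IsCoatom h ∧ b ≤ h ∧ ¬ q ≤ h)) := by
    ext w
    rw [Finset.mem_insert, mem_fil, mem_fil]
    constructor
    · rintro ⟨h1, h2, h3⟩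
      have h3' : w ⊔ q = ⊤ := by
        rw [← sup_assoc, sup_eq_left.2 h1] at h3
        exact h3
      by_cases hwt : w = ⊤
      · exact Or.inl hwt
      · have hqw : ¬ q ≤ w := by
          intro hc
          rw [sup_eq_left.2 hc] at h3'
          exact hwt h3'
        have := exchange hsm w q hq hqw
        rw [h3'] at this
        exact Or.inr ⟨covBy_top_iff.1 this, h1, hqw⟩
    · rintro (rfl | ⟨hco, hbw, hqw⟩)
      · exact ⟨le_top, le_rfl, top_sup_eq _⟩
      · refine ⟨hbw, le_top, ?_⟩
        rw [← sup_assoc, sup_eq_left.2 hbw]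
        have hlt2 : w < w ⊔ q := lt_of_le_of_ne le_sup_left (fun he => hqw (he ▸ le_sup_right))
        exact hco.2 _ hlt2
  have hnot : (⊤ : L) ∉ fil (fun h : L => IsCoatom h ∧ b ≤ h ∧ ¬ q ≤ h) := by
    rw [mem_fil]
    rintro ⟨hco, -, -⟩
    exact hco.1 rfl
  rw [hset, Finset.sum_insert hnot] at hw
  exact hw

private lemma exists_second_atom
    (hatom : ∀ x : L, ∃ S : Set L, (∀ a ∈ S, IsAtomP a) ∧ IsLUB S x)
    (r : L → ℕ) (hr0 : r ⊥ = 0) (hrc : ∀ x y : L, x ⋖ y → r y = r x + 1)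
    (hrank : 2 ≤ r ⊤) {b : L} (hb : IsAtom b) :
    ∃ q : L, IsAtom q ∧ ¬ q ≤ b := by
  by_contra hc
  push_neg at hc
  have htop : (⊤ : L) ≤ b := atomistic_le hatom fun q hq _ => hc q hq
  have hbt : b = ⊤ := le_antisymm le_top htop
  have h1 : r b = 1 := by
    have := hrc ⊥ b hb.bot_covBy
    omega
  rw [hbt] at h1
  omega

private lemma exists_coatom_above
    (hsm : ∀ a b c : L, a ⋖ b → a ⋖ c → b ≠ c → ∃ d, b ⋖ d ∧ c ⋖ d)
    (hatom : ∀ x : L, ∃ S : Set L, (∀ a ∈ S, IsAtomP a) ∧ IsLUB S x)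
    (r : L → ℕ) (hr0 : r ⊥ = 0) (hrc : ∀ x y : L, x ⋖ y → r y = r x + 1)
    (hrank : 2 ≤ r ⊤) {b : L} (hb : IsAtom b) :
    ∃ h : L, IsCoatom h ∧ b ≤ h := by
  obtain ⟨q, hq, hqb⟩ := exists_second_atom hatom r hr0 hrc hrank hb
  obtain ⟨w, hw1, hw2, hw3⟩ := exists_sup_eq hsm hatom hq le_top hqb (le_top : b ≤ ⊤)
  have hqw : ¬ q ≤ w := by
    intro hc
    rw [sup_eq_left.2 hc] at hw3
    exact hw2.ne hw3
  have := exchange hsm w q hq hqw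
  rw [hw3] at this
  exact ⟨w, covBy_top_iff.1 this, hw1⟩

private lemma mu_ne_zero
    (hsm : ∀ a b c : L, a ⋖ b → a ⋖ c → b ≠ c → ∃ d, b ⋖ d ∧ c ⋖ d)
    (hatom : ∀ x : L, ∃ S : Set L, (∀ a ∈ S, IsAtomP a) ∧ IsLUB S x)
    (r : L → ℕ) (hrc : ∀ x y : L, x ⋖ y → r y = r x + 1)
    {x y : L} (hxy : x ≤ y) : mu x y ≠ 0 := by
  intro hc
  have := mu_sign hsm hatom r hrc y x hxy
  rw [hc, mul_zero] at this
  exact lt_irrefl 0 this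

/-- The core linear-independence computation. -/
private lemma core_indep
    (hsm : ∀ a b c : L, a ⋖ b → a ⋖ c → b ≠ c → ∃ d, b ⋖ d ∧ c ⋖ d)
    (hatom : ∀ x : L, ∃ S : Set L, (∀ a ∈ S, IsAtomP a) ∧ IsLUB S x)
    (r : L → ℕ) (hr0 : r ⊥ = 0) (hrc : ∀ x y : L, x ⋖ y → r y = r x + 1)
    (hrank : 2 ≤ r ⊤) (g : L → ℚ)
    (hrel : ∀ h : L, IsCoatom h → ∑ a ∈ fil (fun a : L => IsAtom a ∧ a ≤ h), g a = 0) :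
    ∀ b : L, IsAtom b → g b = 0 := by
  have hCval : ∀ a : L, IsAtom a →
      (∑ h ∈ fil (fun h : L => IsCoatom h ∧ a ≤ h), mu (⊥:L) h)
        = mu (⊥:L) ⊤ + ∑ h ∈ fil (fun h : L => IsCoatom h), mu (⊥:L) h := by
    intro a ha
    have hab : ¬ a ≤ (⊥ : L) := fun hc => ha.1 (le_antisymm hc bot_le)
    have hweis := weisner_coatoms hsm ha hab
    have hcongr : fil (fun h : L => IsCoatom h ∧ (⊥:L) ≤ h ∧ ¬ a ≤ h)
        = fil (fun h : L => IsCoatom h ∧ ¬ a ≤ h) := by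
      ext h; rw [mem_fil, mem_fil]
      exact ⟨fun ⟨h1, _, h3⟩ => ⟨h1, h3⟩, fun ⟨h1, h3⟩ => ⟨h1, bot_le, h3⟩⟩
    rw [hcongr] at hweis
    have hsplit := fil_split (fun h : L => IsCoatom h) (fun h => a ≤ h) (fun h => mu (⊥:L) h)
    have h2 := eq_neg_of_add_eq_zero_right hweis
    have h1 : (∑ h ∈ fil (fun h : L => IsCoatom h ∧ a ≤ h), mu (⊥:L) h)
        = (∑ h ∈ fil (fun h : L => IsCoatom h), mu (⊥:L) h)
          - ∑ h ∈ fil (fun h : L => IsCoatom h ∧ ¬ a ≤ h), mu (⊥:L) h := by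
      rw [← hsplit]; ring
    rw [h1, h2]; ring
  -- the common value is nonzero
  intro b hb
  have hCne : (mu (⊥:L) ⊤ + ∑ h ∈ fil (fun h : L => IsCoatom h), mu (⊥:L) h) ≠ 0 := by
    rw [← hCval b hb]
    obtain ⟨h0, hh0, hbh0⟩ := exists_coatom_above hsm hatom r hr0 hrc hrank hb
    set k := r h0 with hk
    have hrk : ∀ h : L, IsCoatom h → r h = k := by
      intro h hh
      have h1 := hrc h ⊤ hh.covBy_top
      have h2 := hrc h0 ⊤ hh0.covBy_top
      omega
    have hpos : 0 < (-1:ℚ)^k * ∑ h ∈ fil (fun h : L => IsCoatom h ∧ b ≤ h), mu (⊥:L) h := by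
      rw [Finset.mul_sum]
      apply Finset.sum_pos
      · intro h hh
        have hh' : IsCoatom h ∧ b ≤ h :=
          (mem_fil (p := fun h : L => IsCoatom h ∧ b ≤ h)).1 hh
        have := mu_sign hsm hatom r hrc h ⊥ bot_le
        rwa [hr0, zero_add, hrk h hh'.1] at this
      · exact ⟨h0, mem_fil.2 ⟨hh0, hbh0⟩⟩
    intro hc
    rw [hc, mul_zero] at hpos
    exact lt_irrefl 0 hpos
  -- Step A : the total sum of g over atoms is zero
  have hswapA : (∑ h ∈ fil (fun h : L => IsCoatom h),
        ∑ a ∈ fil (fun a : L => IsAtom a ∧ a ≤ h), mu (⊥:L) h * g a)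
      = ∑ a ∈ fil (fun a : L => IsAtom a),
          ∑ h ∈ fil (fun h : L => IsCoatom h ∧ a ≤ h), mu (⊥:L) h * g a := by
    apply sum_filter_comm
    intro h a
    tauto
  have hXzero : (∑ h ∈ fil (fun h : L => IsCoatom h),
      ∑ a ∈ fil (fun a : L => IsAtom a ∧ a ≤ h), mu (⊥:L) h * g a) = 0 := by
    apply Finset.sum_eq_zero
    intro h hh
    have hh' : IsCoatom h := (mem_fil (p := fun h : L => IsCoatom h)).1 hh
    rw [← Finset.mul_sum, hrel h hh', mul_zero]
  have hs : (∑ a ∈ fil (fun a : L => IsAtom a), g a) = 0 := by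
    have : (∑ a ∈ fil (fun a : L => IsAtom a),
        (mu (⊥:L) ⊤ + ∑ h ∈ fil (fun h : L => IsCoatom h), mu (⊥:L) h) * g a) = 0 := by
      rw [← hXzero, hswapA]
      refine Finset.sum_congr rfl fun a ha => ?_
      have ha' : IsAtom a := (mem_fil (p := fun a : L => IsAtom a)).1 ha
      rw [← Finset.sum_mul, hCval a ha']
    rw [← Finset.mul_sum] at this
    exact (mul_eq_zero.1 this).resolve_left hCne
  -- Step B : pair the relations with `mu b ·`
  have hmubtop : mu b ⊤ ≠ 0 := mu_ne_zero hsm hatom r hrc le_top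
  have hswapB : (∑ h ∈ fil (fun h : L => IsCoatom h ∧ b ≤ h),
        ∑ a ∈ fil (fun a : L => IsAtom a ∧ a ≤ h), mu b h * g a)
      = ∑ a ∈ fil (fun a : L => IsAtom a),
          ∑ h ∈ fil (fun h : L => (IsCoatom h ∧ b ≤ h) ∧ a ≤ h), mu b h * g a := by
    apply sum_filter_comm
    intro h a
    tauto
  have hYzero : (∑ h ∈ fil (fun h : L => IsCoatom h ∧ b ≤ h),
      ∑ a ∈ fil (fun a : L => IsAtom a ∧ a ≤ h), mu b h * g a) = 0 := by
    apply Finset.sum_eq_zero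
    intro h hh
    have hh' : IsCoatom h ∧ b ≤ h :=
      (mem_fil (p := fun h : L => IsCoatom h ∧ b ≤ h)).1 hh
    rw [← Finset.mul_sum, hrel h hh'.1, mul_zero]
  have hT : ∀ a : L, IsAtom a →
      (∑ h ∈ fil (fun h : L => (IsCoatom h ∧ b ≤ h) ∧ a ≤ h), mu b h)
        = ((∑ h ∈ fil (fun h : L => IsCoatom h ∧ b ≤ h), mu b h) + mu b ⊤)
            - (if a = b then mu b ⊤ else 0) := by
    intro a ha
    by_cases hab : a = b
    · subst hab
      have hcong : fil (fun h : L => (IsCoatom h ∧ a ≤ h) ∧ a ≤ h)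
          = fil (fun h : L => IsCoatom h ∧ a ≤ h) := by
        ext h; rw [mem_fil, mem_fil]; tauto
      rw [hcong, if_pos rfl]
      ring
    · have hnab : ¬ a ≤ b := fun hc => hab (atom_le_atom ha hb hc)
      have hweis := weisner_coatoms hsm (b := b) ha hnab
      have hsplit := fil_split (fun h : L => IsCoatom h ∧ b ≤ h) (fun h => a ≤ h)
        (fun h => mu b h)
      have hcong : fil (fun h : L => (IsCoatom h ∧ b ≤ h) ∧ ¬ a ≤ h)
          = fil (fun h : L => IsCoatom h ∧ b ≤ h ∧ ¬ a ≤ h) := by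
        ext h; rw [mem_fil, mem_fil]; tauto
      rw [hcong] at hsplit
      rw [if_neg hab]
      have h2 := eq_neg_of_add_eq_zero_right hweis
      have h1 : (∑ h ∈ fil (fun h : L => (IsCoatom h ∧ b ≤ h) ∧ a ≤ h), mu b h)
          = (∑ h ∈ fil (fun h : L => IsCoatom h ∧ b ≤ h), mu b h)
            - ∑ h ∈ fil (fun h : L => IsCoatom h ∧ b ≤ h ∧ ¬ a ≤ h), mu b h := by
        rw [← hsplit]; ring
      rw [h1, h2]; ring
  have hYval : (∑ a ∈ fil (fun a : L => IsAtom a),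
        ∑ h ∈ fil (fun h : L => (IsCoatom h ∧ b ≤ h) ∧ a ≤ h), mu b h * g a)
      = - (mu b ⊤ * g b) := by
    have step1 : ∀ a ∈ fil (fun a : L => IsAtom a),
        (∑ h ∈ fil (fun h : L => (IsCoatom h ∧ b ≤ h) ∧ a ≤ h), mu b h * g a)
          = (((∑ h ∈ fil (fun h : L => IsCoatom h ∧ b ≤ h), mu b h) + mu b ⊤) * g a)
              - (if a = b then mu b ⊤ * g a else 0) := by
      intro a ha
      have ha' : IsAtom a := (mem_fil (p := fun a : L => IsAtom a)).1 ha
      rw [← Finset.sum_mul, hT a ha', sub_mul, ite_mul, zero_mul]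
    rw [Finset.sum_congr rfl step1, Finset.sum_sub_distrib, ← Finset.mul_sum, hs, mul_zero,
      Finset.sum_eq_single b]
    · rw [if_pos rfl]; ring
    · intro c _ hc; rw [if_neg hc]
    · intro hbmem
      exact absurd (mem_fil.2 hb) hbmem
  rw [hswapB, hYval] at hYzero
  have : mu b ⊤ * g b = 0 := neg_eq_zero.1 hYzero
  exact (mul_eq_zero.1 this).resolve_left hmubtop

end Core


/-- Every finite geometric lattice of rank at least 2 has a matching. -/
theorem finite_geometric_lattice_matching (L : Type u) [CompleteLattice L] [Finite L]
    (hL : IsGeomLatFH L) (r : L → ℕ) (hr : IsRankFn r) (hrank : 2 ≤ r ⊤) :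
    HasMatching L := by
  classical
  cases nonempty_fintype L
  obtain ⟨-, -, -, hsm, hatom⟩ := hL
  obtain ⟨hr0, hrc⟩ := hr
  set t : {a : L // IsAtom a} → Finset {h : L // IsCoatom h} :=
    fun a => Finset.univ.filter (fun h => (a : L) ≤ (h : L)) with ht
  have hall : ∀ s : Finset {a : L // IsAtom a}, s.card ≤ (s.biUnion t).card := by
    intro s
    set B := s.biUnion t with hB
    set v : {x // x ∈ s} → ({h // h ∈ B} → ℚ) :=
      (fun a h => if ((a : {a : L // IsAtom a}) : L) ≤ ((h : {h : L // IsCoatom h}) : L)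
        then 1 else 0) with hv
    have hvind : LinearIndependent ℚ v := by
      rw [Fintype.linearIndependent_iff]
      intro c hc
      set g : L → ℚ := fun x => ∑ i : {x // x ∈ s},
        if ((i : {a : L // IsAtom a}) : L) = x then c i else 0 with hg
      have hgval : ∀ i : {x // x ∈ s}, g ((i : {a : L // IsAtom a}) : L) = c i := by
        intro i
        show (∑ j : {x // x ∈ s},
          if ((j : {a : L // IsAtom a}) : L) = ((i : {a : L // IsAtom a}) : L) then c j else 0)
            = c i
        rw [Finset.sum_eq_single i]
        · rw [if_pos rfl]
        · intro j _ hji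
          apply if_neg
          intro hval
          exact hji (Subtype.ext (Subtype.ext hval))
        · intro hni
          exact absurd (Finset.mem_univ i) hni
      have hrel : ∀ h : L, IsCoatom h →
          ∑ a ∈ fil (fun a : L => IsAtom a ∧ a ≤ h), g a = 0 := by
        intro h hco
        have e1 : (∑ a ∈ fil (fun a : L => IsAtom a ∧ a ≤ h), g a)
            = ∑ i : {x // x ∈ s},
                if ((i : {a : L // IsAtom a}) : L) ≤ h then c i else 0 := by
          rw [hg, Finset.sum_comm]
          refine Finset.sum_congr rfl fun i _ => ?_
          rw [Finset.sum_ite_eq (fil (fun a : L => IsAtom a ∧ a ≤ h))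
            (((i : {a : L // IsAtom a}) : L)) (fun _ => c i)]
          by_cases hle : ((i : {a : L // IsAtom a}) : L) ≤ h
          · rw [if_pos hle, if_pos (mem_fil.2 ⟨(i : {a : L // IsAtom a}).2, hle⟩)]
          · rw [if_neg hle, if_neg (by rw [mem_fil]; tauto)]
        rw [e1]
        by_cases hmem : (⟨h, hco⟩ : {h : L // IsCoatom h}) ∈ B
        · have hpt := congrFun hc ⟨⟨h, hco⟩, hmem⟩
          rw [Finset.sum_apply, Pi.zero_apply] at hpt
          have e2 : (∑ i : {x // x ∈ s},
              if ((i : {a : L // IsAtom a}) : L) ≤ h then c i else 0)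
                = ∑ i : {x // x ∈ s}, (c i • v i) ⟨⟨h, hco⟩, hmem⟩ := by
            refine Finset.sum_congr rfl fun i _ => ?_
            simp only [hv, Pi.smul_apply, smul_eq_mul]
            by_cases hle : ((i : {a : L // IsAtom a}) : L) ≤ h
            · rw [if_pos hle, if_pos hle, mul_one]
            · rw [if_neg hle, if_neg hle, mul_zero]
          rw [e2]
          exact hpt
        · apply Finset.sum_eq_zero
          intro i _
          apply if_neg
          intro hle
          apply hmem
          rw [hB, Finset.mem_biUnion]
          exact ⟨(i : {a : L // IsAtom a}), i.2, by rw [ht]; simp [hle]⟩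
      intro i
      rw [← hgval i]
      exact core_indep hsm hatom r hr0 hrc hrank g hrel _ (i : {a : L // IsAtom a}).2
    have h2 : Fintype.card {x // x ∈ s} ≤ Module.finrank ℚ ({h // h ∈ B} → ℚ) :=
      hvind.fintype_card_le_finrank
    rw [Module.finrank_fintype_fun_eq_card] at h2
    simpa [Fintype.card_coe] using h2
  obtain ⟨f, hfinj, hft⟩ := (Finset.all_card_le_biUnion_card_iff_exists_injective t).1 hall
  refine ⟨f, hfinj, fun a => ?_⟩
  have := hft a
  rw [ht] at this
  simpa using (Finset.mem_filter.1 this).2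


end GeomProof
end
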